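/- arXiv:2009.03643 — 6 statements merged into one kernel-verified Lean document; each statement's English description precedes it below -/
import Mathlib

section
/- For every f ∈ W₀¹ and every x ≥ 0, there exist unique functions g ∈ C⁺ and h ∈ C⁺ such that: (i) g(t) = x + f(t) + h(t) for all t ≥ 0; (ii) h(0) = 0 and t ↦ h(t) is nondecreasing; (iii) the Stieltjes measure dh is carried by the set {t : g(t) = 0}, i.e. ∫₀ᵗ 1_{{0}}(g(s)) dh(s) = h(t) for all t ≥ 0. -/
open MeasureTheory Set

/-- The Lebesgue–Stieltjes measure `dh` of `h` is carried by the zero set of `g`: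
there is a measure `μ` on `[0,∞)` with `μ((a,b]) = h(b) − h(a)` for `0 ≤ a ≤ b`
(i.e. `μ = dh`) such that `∫₀ᵗ 1_{{0}}(g(s)) dh(s) = h(t)` for all `t ≥ 0`. -/
def StieltjesCarriedOnZeros (g h : ℝ → ℝ) : Prop :=
  ∃ μ : Measure ℝ,
    (∀ a b : ℝ, 0 ≤ a → a ≤ b → μ (Ioc a b) = ENNReal.ofReal (h b - h a)) ∧
    ∀ t : ℝ, 0 ≤ t →
      ∫⁻ s in Ioc (0 : ℝ) t, (Set.indicator {(0 : ℝ)} (fun _ => (1 : ENNReal)) (g s)) ∂μ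
        = ENNReal.ofReal (h t)

/-- **Lemma 2.2.1 (one-dimensional Skorohod problem).** For every continuous
`f : [0,∞) → ℝ` with `f(0) = 0` and every `x ≥ 0` there exist unique continuous
nonnegative `g, h` on `[0,∞)` such that (i) `g = x + f + h`, (ii) `h(0) = 0` and `h` is
nondecreasing, and (iii) the Stieltjes measure `dh` is carried by `{t : g(t) = 0}`. -/
theorem skorohod_problem_one_dim (f : ℝ → ℝ) (hf : ContinuousOn f (Ici 0))
    (hf0 : f 0 = 0) (x : ℝ) (hx : 0 ≤ x) :
    ∃ g h : ℝ → ℝ,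
      (ContinuousOn g (Ici 0) ∧ ∀ t : ℝ, 0 ≤ t → 0 ≤ g t) ∧
      (ContinuousOn h (Ici 0) ∧ ∀ t : ℝ, 0 ≤ t → 0 ≤ h t) ∧
      (∀ t : ℝ, 0 ≤ t → g t = x + f t + h t) ∧
      h 0 = 0 ∧ MonotoneOn h (Ici 0) ∧
      StieltjesCarriedOnZeros g h ∧
      -- uniqueness
      (∀ g₁ h₁ : ℝ → ℝ,
        (ContinuousOn g₁ (Ici 0) ∧ ∀ t : ℝ, 0 ≤ t → 0 ≤ g₁ t) →
        (ContinuousOn h₁ (Ici 0) ∧ ∀ t : ℝ, 0 ≤ t → 0 ≤ h₁ t) →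
        (∀ t : ℝ, 0 ≤ t → g₁ t = x + f t + h₁ t) →
        h₁ 0 = 0 → MonotoneOn h₁ (Ici 0) →
        StieltjesCarriedOnZeros g₁ h₁ →
        EqOn g g₁ (Ici 0) ∧ EqOn h h₁ (Ici 0)) := by
  classical
  -- the extended driving functions
  set f' : ℝ → ℝ := fun s => f (s ⊔ 0) with hf'def
  have hf'c : Continuous f' :=
    hf.comp_continuous (continuous_id.max continuous_const) (fun t => le_max_right t 0)
  have hf'eq : ∀ s : ℝ, 0 ≤ s → f' s = f s := by
    intro s hs; simp [hf'def, sup_eq_left.mpr hs]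
  set F : ℝ → ℝ := fun s => -(x + f' s) with hFdef
  have hFc : Continuous F := (continuous_const.add hf'c).neg
  have hFeq : ∀ s : ℝ, 0 ≤ s → F s = -(x + f s) := by
    intro s hs; simp [hFdef, hf'eq s hs]
  set G : ℝ → ℝ := fun s => F s ⊔ 0 with hGdef
  have hGc : Continuous G := hFc.max continuous_const
  have hG0 : G 0 = 0 := by
    have h1 : F 0 = -x := by rw [hFeq 0 le_rfl, hf0, add_zero]
    simp [hGdef, h1, sup_eq_right.mpr (neg_nonpos.mpr hx)]
  -- the regulator h
  set h : ℝ → ℝ := fun t => sSup (G '' Icc 0 t) with hhdef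
  have hbdd : ∀ t : ℝ, BddAbove (G '' Icc 0 t) :=
    fun t => (isCompact_Icc.image hGc).bddAbove
  have hne : ∀ t : ℝ, 0 ≤ t → (G '' Icc 0 t).Nonempty :=
    fun t ht => ⟨G 0, mem_image_of_mem _ (left_mem_Icc.mpr ht)⟩
  have hGmem : ∀ u t : ℝ, 0 ≤ u → u ≤ t → G u ≤ h t :=
    fun u t hu hut => le_csSup (hbdd t) ⟨u, ⟨hu, hut⟩, rfl⟩
  have hh0 : h 0 = 0 := by
    rw [hhdef]; simp only [Icc_self, image_singleton, csSup_singleton, hG0]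
  have hhneg : ∀ t : ℝ, t < 0 → h t = 0 := by
    intro t ht
    rw [hhdef]
    simp only [Icc_eq_empty_of_lt ht, image_empty, Real.sSup_empty]
  have hhnn : ∀ t : ℝ, 0 ≤ h t := by
    intro t
    rcases le_or_gt 0 t with ht | ht
    · calc (0:ℝ) = G 0 := hG0.symm
        _ ≤ h t := hGmem 0 t le_rfl ht
    · exact (hhneg t ht).ge
  have hmono : Monotone h := by
    intro s t hst
    rcases le_or_gt 0 s with hs | hs
    · exact csSup_le_csSup (hbdd t) (hne s hs) (image_mono (Icc_subset_Icc_right hst))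
    · rw [hhneg s hs]; exact hhnn t
  -- the workhorse sup estimate
  have hsup : ∀ a b c : ℝ, 0 ≤ a → a ≤ b → h a ≤ c →
      (∀ u : ℝ, a ≤ u → u ≤ b → G u ≤ c) → h b ≤ c := by
    intro a b c ha hab hac H
    refine csSup_le (hne b (ha.trans hab)) ?_
    rintro y ⟨u, ⟨hu0, hub⟩, rfl⟩
    rcases le_or_gt u a with h1 | h1
    · exact le_trans (hGmem u a hu0 h1) hac
    · exact H u h1.le hub
  -- continuity of h on [0,∞)
  have hcOn : ContinuousOn h (Ici 0) := by
    intro t₀ ht₀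
    rw [Metric.continuousWithinAt_iff]
    intro ε hε
    have hUC := isCompact_Icc.uniformContinuousOn_of_continuous
      (s := Icc (0:ℝ) (t₀+1)) hGc.continuousOn
    rw [Metric.uniformContinuousOn_iff] at hUC
    obtain ⟨δ, hδ, hδ'⟩ := hUC (ε/2) (by linarith)
    refine ⟨min δ 1, lt_min hδ one_pos, ?_⟩
    intro t ht hdist
    rw [Real.dist_eq] at hdist
    have h1 : |t - t₀| < δ := lt_of_lt_of_le hdist (min_le_left _ _)
    have h2 : |t - t₀| < 1 := lt_of_lt_of_le hdist (min_le_right _ _)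
    have habs1 := abs_lt.mp h1
    have habs2 := abs_lt.mp h2
    have ht₀' : (0:ℝ) ≤ t₀ := ht₀
    have ht' : (0:ℝ) ≤ t := ht
    have key : ∀ a b : ℝ, 0 ≤ a → a ≤ b → b ≤ t₀ + 1 → b - a < δ → h b ≤ h a + ε / 2 := by
      intro a b ha hab hb1 hd
      refine hsup a b (h a + ε/2) ha hab (by linarith) ?_
      intro u hu1 hu2
      have hua : dist u a < δ := by
        rw [Real.dist_eq, abs_of_nonneg (by linarith)]; linarith
      have huK : u ∈ Icc (0:ℝ) (t₀+1) := ⟨by linarith, by linarith⟩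
      have haK : a ∈ Icc (0:ℝ) (t₀+1) := ⟨ha, by linarith⟩
      have := hδ' u huK a haK hua
      rw [Real.dist_eq] at this
      have := (abs_lt.mp this).2
      have hGa : G a ≤ h a := hGmem a a ha le_rfl
      linarith
    rw [Real.dist_eq, abs_lt]
    rcases le_total t t₀ with hc | hc
    · have := key t t₀ ht' hc (by linarith) (by linarith)
      have hm := hmono hc
      constructor <;> linarith
    · have := key t₀ t ht₀' hc (by linarith) (by linarith)
      have hm := hmono hc
      constructor <;> linarith
  -- global continuity of h
  have hclamp : ∀ t : ℝ, h t = h (t ⊔ 0) := by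
    intro t
    rcases le_or_gt 0 t with ht | ht
    · rw [sup_eq_left.mpr ht]
    · rw [hhneg t ht, sup_eq_right.mpr ht.le, hh0]
  have hcont : Continuous h := by
    have heq : h = (h ∘ fun t => t ⊔ 0) := funext hclamp
    rw [heq]
    exact hcOn.comp_continuous (continuous_id.max continuous_const) (fun t => le_max_right t 0)
  -- the Stieltjes measure of h
  set H : StieltjesFunction ℝ := ⟨h, hmono, fun z => hcont.continuousAt.continuousWithinAt⟩
    with hHdef
  set μ : Measure ℝ := H.measure with hμdef
  have hμIoc : ∀ a b : ℝ, μ (Ioc a b) = ENNReal.ofReal (h b - h a) := fun a b =>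
    H.measure_Ioc a b
  -- the reflected path g
  set g : ℝ → ℝ := fun t => x + f' t + h t with hgdef
  have hgc : Continuous g := (continuous_const.add hf'c).add hcont
  have hgF : ∀ t : ℝ, g t = h t - F t := by intro t; simp [hgdef, hFdef]; ring
  have hgnn : ∀ t : ℝ, 0 ≤ t → 0 ≤ g t := by
    intro t ht
    have h1 : F t ≤ G t := le_sup_left
    have h2 : G t ≤ h t := hGmem t t ht le_rfl
    rw [hgF]; linarith
  have hgeq : ∀ t : ℝ, 0 ≤ t → g t = x + f t + h t := by
    intro t ht; rw [hgdef]; simp only [hf'eq t ht]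
  have hGapp : ∀ u : ℝ, G u = F u ⊔ 0 := fun u => by rw [hGdef]
  have happ : ∀ t : ℝ, h t = sSup (G '' Icc 0 t) := fun t => by rw [hhdef]
  clear_value μ H g h G F f'
  -- dh does not charge {g ≠ 0} ∩ (0,∞)
  have hnull : μ {s : ℝ | 0 < s ∧ g s ≠ 0} = 0 := by
    apply measure_null_of_locally_null
    rintro s ⟨hs0, hsne⟩
    have hgpos : 0 < g s := (hgnn s hs0.le).lt_of_ne (Ne.symm hsne)
    have hFh : F s < h s := by have := hgF s; linarith
    obtain ⟨δ₁, hδ₁, hδ₁'⟩ := Metric.continuousAt_iff.mp hFc.continuousAt ((h s - F s)/2)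
      (by linarith)
    obtain ⟨δ₂, hδ₂, hδ₂'⟩ := Metric.continuousAt_iff.mp hcont.continuousAt ((h s - F s)/2)
      (by linarith)
    set δ : ℝ := min (min δ₁ δ₂) s / 2 with hδdef
    have hδpos : 0 < δ := by
      apply div_pos _ two_pos
      exact lt_min (lt_min hδ₁ hδ₂) hs0
    have hδle₁ : δ < δ₁ := by
      have h1 : min (min δ₁ δ₂) s ≤ min δ₁ δ₂ := min_le_left _ _
      have h2 : min δ₁ δ₂ ≤ δ₁ := min_le_left _ _
      rw [hδdef]; linarith
    have hδle₂ : δ < δ₂ := by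
      have h1 : min (min δ₁ δ₂) s ≤ min δ₁ δ₂ := min_le_left _ _
      have h2 : min δ₁ δ₂ ≤ δ₂ := min_le_right _ _
      rw [hδdef]; linarith
    have hδles : δ < s := by
      have h1 : min (min δ₁ δ₂) s ≤ s := min_le_right _ _
      rw [hδdef]; linarith
    -- h (s - δ) is large
    have hha : (F s + h s)/2 < h (s - δ) := by
      have hd : dist (s - δ) s < δ₂ := by
        rw [Real.dist_eq]; rw [abs_of_nonpos (by linarith)]; linarith
      have := hδ₂' hd
      rw [Real.dist_eq] at this
      have := (abs_lt.mp this).1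
      linarith
    -- h is constant on [s-δ, s+δ]
    have hconst : h (s + δ) ≤ h (s - δ) := by
      refine hsup (s - δ) (s + δ) (h (s - δ)) (by linarith) (by linarith) le_rfl ?_
      intro u hu1 hu2
      have hd : dist u s < δ₁ := by
        rw [Real.dist_eq, abs_lt]; constructor <;> linarith
      have := hδ₁' hd
      rw [Real.dist_eq] at this
      have hFu := (abs_lt.mp this).2
      have h0 : (0:ℝ) ≤ h (s - δ) := hhnn _
      rw [hGapp u]
      refine sup_le ?_ h0
      linarith
    refine ⟨Ioo (s - δ) (s + δ),
      mem_nhdsWithin_of_mem_nhds (Ioo_mem_nhds (by linarith) (by linarith)), ?_⟩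
    have hle : μ (Ioo (s - δ) (s + δ)) ≤ μ (Ioc (s - δ) (s + δ)) :=
      measure_mono Ioo_subset_Ioc_self
    rw [hμIoc] at hle
    have hz : ENNReal.ofReal (h (s + δ) - h (s - δ)) = 0 :=
      ENNReal.ofReal_eq_zero.mpr (by linarith)
    exact le_antisymm (hz ▸ hle) zero_le
  -- the carried-on-zeros integral identity for (g, h)
  have hZm : MeasurableSet (g ⁻¹' {0}) := (isClosed_singleton.preimage hgc).measurableSet
  have hint : ∀ t : ℝ, 0 ≤ t →
      ∫⁻ s in Ioc (0 : ℝ) t, (Set.indicator {(0 : ℝ)} (fun _ => (1 : ENNReal)) (g s)) ∂μ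
        = ENNReal.ofReal (h t) := by
    intro t ht
    have hind : (fun s => Set.indicator {(0:ℝ)} (fun _ => (1:ENNReal)) (g s))
        = (g ⁻¹' {0}).indicator (1 : ℝ → ENNReal) := by
      funext s
      by_cases hgs : g s = 0 <;> simp [Set.indicator_apply, hgs]
    rw [hind, lintegral_indicator_one hZm, Measure.restrict_apply hZm, inter_comm]
    have hdiff : μ (Ioc (0:ℝ) t \ g ⁻¹' {0}) = 0 := by
      refine measure_mono_null ?_ hnull
      rintro s ⟨⟨hs0, hst⟩, hsz⟩
      exact ⟨hs0, by simpa using hsz⟩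
    have hsum := measure_inter_add_diff (μ := μ) (Ioc (0:ℝ) t) hZm
    rw [hdiff, add_zero] at hsum
    rw [hsum, hμIoc, hh0, sub_zero]
  -- uniqueness: any solution's regulator equals h
  have huniq : ∀ g₁ h₁ : ℝ → ℝ, ContinuousOn g₁ (Ici 0) → (∀ t : ℝ, 0 ≤ t → 0 ≤ g₁ t) →
      (∀ t : ℝ, 0 ≤ t → 0 ≤ h₁ t) →
      (∀ t : ℝ, 0 ≤ t → g₁ t = x + f t + h₁ t) → MonotoneOn h₁ (Ici 0) →
      StieltjesCarriedOnZeros g₁ h₁ → ∀ t : ℝ, 0 ≤ t → h₁ t = h t := by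
    intro g₁ h₁ hg₁c hg₁nn hh₁nn heq₁ hmono₁ hS t ht
    obtain ⟨μ₁, hμ₁, hint₁⟩ := hS
    -- lower bound : h t ≤ h₁ t
    have hlow : h t ≤ h₁ t := by
      rw [happ t]
      refine csSup_le (hne t ht) ?_
      rintro y ⟨u, ⟨hu0, hut⟩, rfl⟩
      have hg1u := hg₁nn u hu0
      have heq := heq₁ u hu0
      have hFu : F u = -(x + f u) := hFeq u hu0
      have h2 : h₁ u ≤ h₁ t := hmono₁ (mem_Ici.mpr hu0) (mem_Ici.mpr ht) hut
      rw [hGapp u, hFu]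
      refine sup_le (by linarith) (hh₁nn t ht)
    -- upper bound : h₁ t ≤ h t
    have hupp : h₁ t ≤ h t := by
      set Z : Set ℝ := Icc 0 t ∩ g₁ ⁻¹' {0} with hZdef
      have hZcl : IsClosed Z :=
        (hg₁c.mono Icc_subset_Ici_self).preimage_isClosed_of_isClosed isClosed_Icc
          isClosed_singleton
      have hZK : IsCompact Z := isCompact_Icc.of_isClosed_subset hZcl inter_subset_left
      rcases Z.eq_empty_or_nonempty with hZe | hZne
      · -- the integrand is zero on all of (0, t]
        have h0 : ∫⁻ s in Ioc (0:ℝ) t,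
            (Set.indicator {(0:ℝ)} (fun _ => (1:ENNReal)) (g₁ s)) ∂μ₁ = 0 := by
          have hz : ∀ s ∈ Ioc (0:ℝ) t,
              Set.indicator {(0:ℝ)} (fun _ => (1:ENNReal)) (g₁ s) = 0 := by
            intro s hs
            apply indicator_of_notMem
            intro hmem
            have : s ∈ Z := ⟨⟨hs.1.le, hs.2⟩, by simpa using hmem⟩
            rw [hZe] at this
            exact this
          calc ∫⁻ s in Ioc (0:ℝ) t,
                (Set.indicator {(0:ℝ)} (fun _ => (1:ENNReal)) (g₁ s)) ∂μ₁
              = ∫⁻ _ in Ioc (0:ℝ) t, (0:ENNReal) ∂μ₁ :=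
                setLIntegral_congr_fun measurableSet_Ioc hz
            _ = 0 := lintegral_zero
        have := hint₁ t ht
        rw [h0] at this
        have h1 : h₁ t ≤ 0 := ENNReal.ofReal_eq_zero.mp this.symm
        linarith [hhnn t]
      · set p : ℝ := sSup Z with hpdef
        have hpZ : p ∈ Z := hZK.sSup_mem hZne
        obtain ⟨⟨hp0, hpt⟩, hpz'⟩ := hpZ
        have hpz : g₁ p = 0 := by simpa using hpz'
        have hps : ∀ s : ℝ, p < s → s ≤ t → g₁ s ≠ 0 := by
          intro s h1 h2 hc
          have hsZ : s ∈ Z := ⟨⟨(hp0.trans h1.le), h2⟩, by simpa using hc⟩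
          exact absurd (le_csSup hZK.bddAbove hsZ) (not_le.mpr h1)
        have hzero : ∫⁻ s in Ioc p t,
            (Set.indicator {(0:ℝ)} (fun _ => (1:ENNReal)) (g₁ s)) ∂μ₁ = 0 := by
          have hz : ∀ s ∈ Ioc p t,
              Set.indicator {(0:ℝ)} (fun _ => (1:ENNReal)) (g₁ s) = 0 := by
            intro s hs
            apply indicator_of_notMem
            intro hmem
            exact hps s hs.1 hs.2 (by simpa using hmem)
          calc ∫⁻ s in Ioc p t,
                (Set.indicator {(0:ℝ)} (fun _ => (1:ENNReal)) (g₁ s)) ∂μ₁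
              = ∫⁻ _ in Ioc p t, (0:ENNReal) ∂μ₁ :=
                setLIntegral_congr_fun measurableSet_Ioc hz
            _ = 0 := lintegral_zero
        have hdisj : Disjoint (Ioc (0:ℝ) p) (Ioc p t) := by
          rw [Set.disjoint_left]
          intro s hs hs'
          exact absurd hs'.1 (not_lt.mpr hs.2)
        have hsplit : Ioc (0:ℝ) p ∪ Ioc p t = Ioc 0 t := Ioc_union_Ioc_eq_Ioc hp0 hpt
        have hunion := lintegral_union (μ := μ₁) (A := Ioc (0:ℝ) p) (B := Ioc p t)
          (f := fun s => Set.indicator {(0:ℝ)} (fun _ => (1:ENNReal)) (g₁ s))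
          measurableSet_Ioc hdisj
        rw [hsplit, hint₁ t ht, hint₁ p hp0, hzero, add_zero] at hunion
        have heqhp : h₁ t = h₁ p :=
          (ENNReal.ofReal_eq_ofReal_iff (hh₁nn t ht) (hh₁nn p hp0)).mp hunion
        have hgp := heq₁ p hp0
        rw [hpz] at hgp
        have hple : -(x + f p) ≤ h t := by
          have h1 : F p ≤ G p := by rw [hGapp p]; exact le_sup_left
          have h2 : G p ≤ h t := hGmem p t hp0 hpt
          rw [← hFeq p hp0]; linarith
        rw [heqhp]
        linarith
    linarith
  refine ⟨g, h, ⟨hgc.continuousOn, hgnn⟩, ⟨hcOn, fun t _ => hhnn t⟩, hgeq, hh0,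
    hmono.monotoneOn _, ⟨μ, fun a b _ _ => hμIoc a b, hint⟩, ?_⟩
  intro g₁ h₁ ⟨hg₁c, hg₁nn⟩ ⟨hh₁c, hh₁nn⟩ heq₁ hh₁0 hmono₁ hS
  have key : ∀ t : ℝ, 0 ≤ t → h₁ t = h t := huniq g₁ h₁ hg₁c hg₁nn hh₁nn heq₁ hmono₁ hS
  constructor
  · intro t ht
    rw [hgeq t ht, heq₁ t ht, key t ht]
  · intro t ht
    exact (key t ht).symm
end

section
/- Let f ∈ W₀¹ and x ≥ 0. Define g(t) = x + f(t) − min_{0≤s≤t} min(x + f(s), 0) and h(t) = − min_{0≤s≤t} min(x + f(s), 0). Then g ∈ C⁺, h ∈ C⁺, g(t) = x + f(t) + h(t) for all t ≥ 0, h(0) = 0, h is nondecreasing, and the Stieltjes measure dh is carried by {t : g(t) = 0}, i.e. ∫₀ᵗ 1_{{0}}(g(s)) dh(s) = h(t) for all t ≥ 0. -/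
open MeasureTheory Set

noncomputable def runMin (F : ℝ → ℝ) (t : ℝ) : ℝ := sInf (F '' Icc 0 t)

lemma runMin_bddBelow {F : ℝ → ℝ} (hF : ContinuousOn F (Ici 0)) {t : ℝ} (_ht : 0 ≤ t) :
    BddBelow (F '' Icc 0 t) :=
  ((isCompact_Icc).image_of_continuousOn (hF.mono fun s hs => hs.1)).bddBelow

lemma runMin_mem {F : ℝ → ℝ} (hF : ContinuousOn F (Ici 0)) {t : ℝ} (ht : 0 ≤ t) :
    runMin F t ∈ F '' Icc 0 t :=
  ((isCompact_Icc).image_of_continuousOn (hF.mono fun s hs => hs.1)).sInf_mem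
    ((nonempty_Icc.2 ht).image F)

lemma runMin_le {F : ℝ → ℝ} (hF : ContinuousOn F (Ici 0)) {s t : ℝ} (h0 : 0 ≤ s) (hst : s ≤ t) :
    runMin F t ≤ F s :=
  csInf_le (runMin_bddBelow hF (h0.trans hst)) ⟨s, ⟨h0, hst⟩, rfl⟩

lemma runMin_anti {F : ℝ → ℝ} (hF : ContinuousOn F (Ici 0)) {s t : ℝ} (h0 : 0 ≤ s) (hst : s ≤ t) :
    runMin F t ≤ runMin F s :=
  csInf_le_csInf (runMin_bddBelow hF (h0.trans hst)) ((nonempty_Icc.2 h0).image F)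
    (image_mono (Icc_subset_Icc le_rfl hst))

lemma runMin_continuousOn {F : ℝ → ℝ} (hF : ContinuousOn F (Ici 0)) :
    ContinuousOn (runMin F) (Ici 0) := by
  intro t₀ ht₀
  rw [Metric.continuousWithinAt_iff]
  intro ε hε
  have hK : IsCompact (Icc (0:ℝ) (t₀ + 1)) := isCompact_Icc
  have hFK : UniformContinuousOn F (Icc 0 (t₀+1)) :=
    hK.uniformContinuousOn_of_continuous (hF.mono fun s hs => hs.1)
  rw [Metric.uniformContinuousOn_iff] at hFK
  obtain ⟨δ, hδ, hδ'⟩ := hFK ε hε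
  refine ⟨min δ 1, by positivity, ?_⟩
  intro t ht hdist
  have ht0 : (0:ℝ) ≤ t := ht
  have ht₀0 : (0:ℝ) ≤ t₀ := ht₀
  rw [Real.dist_eq] at hdist
  have hd1 : |t - t₀| < δ := lt_of_lt_of_le hdist (min_le_left _ _)
  have hd2 : |t - t₀| < 1 := lt_of_lt_of_le hdist (min_le_right _ _)
  rw [abs_lt] at hd1 hd2
  have key : ∀ u v : ℝ, 0 ≤ u → u ≤ v → v ≤ t₀ + 1 → v - u < δ →
      runMin F u - runMin F v < ε := by
    intro u v hu huv hv hδuv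
    obtain ⟨s, ⟨hs0, hsv⟩, hsF⟩ := runMin_mem hF (hu.trans huv)
    rcases le_or_gt s u with hsu | hsu
    · have h1 : runMin F u ≤ F s := runMin_le hF hs0 hsu
      linarith
    · have h1 : runMin F u ≤ F u := runMin_le hF hu le_rfl
      have h2 : dist (F u) (F s) < ε := hδ' u ⟨hu, huv.trans hv⟩ s ⟨hs0, hsv.trans hv⟩ (by
        rw [Real.dist_eq, abs_lt]; constructor <;> linarith)
      rw [Real.dist_eq, abs_lt] at h2
      linarith
  rw [Real.dist_eq]
  rcases le_total t t₀ with hle | hle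
  · have hanti : runMin F t₀ ≤ runMin F t := runMin_anti hF ht0 hle
    rw [abs_of_nonneg (by linarith)]
    exact key t t₀ ht0 hle (by linarith) (by linarith)
  · have hanti : runMin F t ≤ runMin F t₀ := runMin_anti hF ht₀0 hle
    rw [abs_of_nonpos (by linarith)]
    have := key t₀ t ht₀0 hle (by linarith) (by linarith)
    linarith

/-- **Explicit solution of the one-dimensional Skorohod problem** (proof of Lemma 2.2.1).
For continuous `f : [0,∞) → ℝ` with `f(0) = 0` and `x ≥ 0`, the functions
`g(t) = x + f(t) − min_{0 ≤ s ≤ t} min(x + f(s), 0)` and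
`h(t) = − min_{0 ≤ s ≤ t} min(x + f(s), 0)` are continuous and nonnegative on `[0,∞)`,
satisfy `g = x + f + h`, `h(0) = 0`, `h` is nondecreasing, and the Stieltjes measure `dh`
is carried by `{t : g(t) = 0}`. -/
theorem skorohod_problem_one_dim_explicit (f : ℝ → ℝ) (hf : ContinuousOn f (Ici 0))
    (hf0 : f 0 = 0) (x : ℝ) (hx : 0 ≤ x) (g h : ℝ → ℝ)
    (hg_def : ∀ t : ℝ, 0 ≤ t →
      g t = x + f t - sInf ((fun s => min (x + f s) 0) '' Icc 0 t))
    (hh_def : ∀ t : ℝ, 0 ≤ t →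
      h t = - sInf ((fun s => min (x + f s) 0) '' Icc 0 t)) :
    (ContinuousOn g (Ici 0) ∧ ∀ t : ℝ, 0 ≤ t → 0 ≤ g t) ∧
    (ContinuousOn h (Ici 0) ∧ ∀ t : ℝ, 0 ≤ t → 0 ≤ h t) ∧
    (∀ t : ℝ, 0 ≤ t → g t = x + f t + h t) ∧
    h 0 = 0 ∧ MonotoneOn h (Ici 0) ∧
    StieltjesCarriedOnZeros g h := by
  set F : ℝ → ℝ := fun s => min (x + f s) 0 with hFdef
  have hFc : ContinuousOn F (Ici 0) :=
    (continuousOn_const.add hf).inf continuousOn_const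
  have hF0 : F 0 = 0 := by simp [hFdef, hf0, hx]
  have hg : ∀ t : ℝ, 0 ≤ t → g t = x + f t - runMin F t := fun t ht => hg_def t ht
  have hh : ∀ t : ℝ, 0 ≤ t → h t = - runMin F t := fun t ht => hh_def t ht
  have hm0 : runMin F 0 = 0 := by
    unfold runMin; rw [Icc_self, image_singleton, csInf_singleton, hF0]
  have hmle0 : ∀ t : ℝ, 0 ≤ t → runMin F t ≤ 0 := fun t ht => by
    have := runMin_le hFc le_rfl ht; rwa [hF0] at this
  have hmleF : ∀ t : ℝ, 0 ≤ t → runMin F t ≤ F t := fun t ht => runMin_le hFc ht le_rfl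
  have hmcont : ContinuousOn (runMin F) (Ici 0) := runMin_continuousOn hFc
  have hgcont : ContinuousOn g (Ici 0) :=
    ContinuousOn.congr ((continuousOn_const.add hf).sub hmcont) (fun t ht => hg t ht)
  have hgpos : ∀ t : ℝ, 0 ≤ t → 0 ≤ g t := by
    intro t ht; rw [hg t ht]
    have h1 := hmleF t ht
    have h2 : F t ≤ x + f t := min_le_left _ _
    linarith
  have hhcont : ContinuousOn h (Ici 0) :=
    ContinuousOn.congr hmcont.neg (fun t ht => hh t ht)
  have hhpos : ∀ t : ℝ, 0 ≤ t → 0 ≤ h t := fun t ht => by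
    rw [hh t ht]; linarith [hmle0 t ht]
  have hgxfh : ∀ t : ℝ, 0 ≤ t → g t = x + f t + h t := fun t ht => by
    rw [hg t ht, hh t ht]; ring
  have hh0 : h 0 = 0 := by rw [hh 0 le_rfl, hm0, neg_zero]
  have hhmono : MonotoneOn h (Ici 0) := by
    intro a ha b hb hab
    rw [hh a ha, hh b hb]
    have := runMin_anti hFc ha hab
    linarith
  -- key lemma: where g ≠ 0, the running min (hence h) is locally constant
  have key : ∀ a b c : ℝ, 0 ≤ a → (∀ s, s ∈ Ioo a b → g s ≠ 0) →
      a ≤ c → c < b → runMin F c = runMin F a := by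
    intro a b c ha hgne hac hcb
    have hc0 : (0:ℝ) ≤ c := ha.trans hac
    have hle : runMin F c ≤ runMin F a := runMin_anti hFc ha hac
    rcases eq_or_lt_of_le hle with heq | hlt
    · exact heq
    · exfalso
      obtain ⟨s, ⟨hs0, hsc⟩, hsF⟩ := runMin_mem hFc hc0
      have hsa : a < s := by
        by_contra hsa; push_neg at hsa
        have h1 : runMin F a ≤ F s := runMin_le hFc hs0 hsa
        linarith
      have hs_mem : s ∈ Ioo a b := ⟨hsa, lt_of_le_of_lt hsc hcb⟩
      have hms : runMin F s = runMin F c := le_antisymm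
        (by rw [← hsF]; exact runMin_le hFc hs0 le_rfl)
        (runMin_anti hFc hs0 hsc)
      have hFneg : F s < 0 := by rw [hsF]; exact lt_of_lt_of_le hlt (hmle0 a ha)
      have hxfs : x + f s < 0 := by
        by_contra hge; push_neg at hge
        rw [hFdef] at hFneg
        simp only [min_lt_iff, lt_self_iff_false, or_false] at hFneg
        linarith
      have hFs : F s = x + f s := by rw [hFdef]; exact min_eq_left hxfs.le
      have hgs : g s = 0 := by
        rw [hg s hs0, hms, ← hsF, hFs]; ring
      exact hgne s hs_mem hgs
  -- the Stieltjes function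
  have hmemIci : ∀ t : ℝ, max t 0 ∈ Ici (0:ℝ) := fun t => le_max_right t 0
  set H : ℝ → ℝ := fun t => h (max t 0) with hHdef
  have hHeq : ∀ t : ℝ, 0 ≤ t → H t = h t := fun t ht => by
    rw [hHdef]; simp only; rw [max_eq_left ht]
  have hHmono : Monotone H := fun a b hab =>
    hhmono (hmemIci a) (hmemIci b) (max_le_max hab le_rfl)
  have hHcont : Continuous H :=
    hhcont.comp_continuous (continuous_id.max continuous_const) hmemIci
  set S : StieltjesFunction ℝ := ⟨H, hHmono, fun y => (hHcont.continuousAt).continuousWithinAt⟩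
    with hSdef
  have hSIoc : ∀ a b : ℝ, 0 ≤ a → a ≤ b →
      S.measure (Ioc a b) = ENNReal.ofReal (h b - h a) := by
    intro a b ha hab
    rw [S.measure_Ioc]
    have h1 : S b = H b := rfl
    have h2 : S a = H a := rfl
    rw [h1, h2, hHeq b (ha.trans hab), hHeq a ha]
  refine ⟨⟨hgcont, hgpos⟩, ⟨hhcont, hhpos⟩, hgxfh, hh0, hhmono, S.measure, hSIoc, ?_⟩
  intro t ht
  have hA : MeasurableSet (Ioc (0:ℝ) t) := measurableSet_Ioc
  -- singleton has measure zero since H is continuous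
  have hsing : S.measure {t} = 0 := by
    rw [StieltjesFunction.measure_singleton]
    have hll : Function.leftLim S t = S t :=
      leftLim_eq_of_tendsto (h := nhdsLT_neBot t)
        (hHcont.continuousAt.continuousWithinAt.tendsto)
    rw [hll, sub_self, ENNReal.ofReal_zero]
  -- open intervals inside the nonzero set are null
  have hIoo0 : ∀ a b : ℝ, Ioo a b ⊆ {s : ℝ | s ∈ Ioo 0 t ∧ g s ≠ 0} →
      S.measure (Ioo a b) = 0 := by
    intro a b hab
    rcases le_or_gt b a with hba | hba
    · rw [Ioo_eq_empty (by exact fun hlt => absurd hba (not_le.2 hlt)), measure_empty]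
    · have ha0 : (0:ℝ) ≤ a := by
        by_contra ha0; push_neg at ha0
        rcases le_or_gt b 0 with hb0 | hb0
        · have hm := hab (⟨by linarith, by linarith⟩ : (a+b)/2 ∈ Ioo a b)
          have := hm.1.1; linarith
        · have hm := hab (⟨by linarith, by linarith⟩ : a/2 ∈ Ioo a b)
          have := hm.1.1; linarith
      have hcover : Ioo a b ⊆ ⋃ n : ℕ, Ioc a (b - (b-a)/(n+1)) := by
        intro s hs
        obtain ⟨n, hn⟩ := exists_nat_gt ((b-a)/(b-s))
        refine mem_iUnion.2 ⟨n, hs.1, ?_⟩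
        have hbs : (0:ℝ) < b - s := by linarith [hs.2]
        rw [div_lt_iff₀ hbs] at hn
        have hn1 : (b - a) / ((n:ℝ)+1) < b - s := by
          rw [div_lt_iff₀ (by positivity)]
          nlinarith
        linarith
      refine measure_mono_null hcover (measure_iUnion_null fun n => ?_)
      have hpos : (0:ℝ) < (b-a)/((n:ℝ)+1) := div_pos (by linarith) (by positivity)
      have hle1 : (b-a)/((n:ℝ)+1) ≤ b - a := by
        apply div_le_self (by linarith) (by norm_num)
      have hac : a ≤ b - (b-a)/((n:ℝ)+1) := by linarith
      have hcb : b - (b-a)/((n:ℝ)+1) < b := by linarith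
      have hkey := key a b (b - (b-a)/((n:ℝ)+1)) ha0 (fun s hs => (hab hs).2) hac hcb
      rw [hSIoc a _ ha0 hac, hh _ (ha0.trans hac), hh a ha0, hkey, sub_self,
        ENNReal.ofReal_zero]
  -- the nonzero set in (0,t) is open
  have hN'open : IsOpen {s : ℝ | s ∈ Ioo 0 t ∧ g s ≠ 0} := by
    rw [isOpen_iff_mem_nhds]
    rintro s ⟨hs1, hs2⟩
    have hgs : ContinuousAt g s := hgcont.continuousAt (Ici_mem_nhds hs1.1)
    have h1 : {u : ℝ | g u ≠ 0} ∈ nhds s := by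
      have := hgs.preimage_mem_nhds (compl_singleton_mem_nhds hs2)
      exact this
    have h2 : Ioo (0:ℝ) t ∈ nhds s := isOpen_Ioo.mem_nhds hs1
    filter_upwards [h2, h1] with u hu1 hu2
    exact ⟨hu1, hu2⟩
  -- hence it is null
  have hN' : S.measure {s : ℝ | s ∈ Ioo 0 t ∧ g s ≠ 0} = 0 := by
    obtain ⟨T, hTsub, hTeq⟩ := Real.isTopologicalBasis_Ioo_rat.open_eq_sUnion hN'open
    rw [hTeq]
    have hTc : T.Countable := by
      refine Set.Countable.mono hTsub ?_
      apply Set.countable_iUnion; intro a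
      apply Set.countable_iUnion; intro b
      apply Set.countable_iUnion; intro _
      exact countable_singleton _
    rw [measure_sUnion_null_iff hTc]
    intro u hu
    have := hTsub hu
    simp only [mem_iUnion, mem_singleton_iff] at this
    obtain ⟨q, r, _, rfl⟩ := this
    apply hIoo0
    have hsub : Ioo (q:ℝ) r ⊆ ⋃₀ T := subset_sUnion_of_mem hu
    rwa [← hTeq] at hsub
  -- total null set
  have hnull : (S.measure.restrict (Ioc 0 t)) {s : ℝ | g s ≠ 0} = 0 := by
    rw [Measure.restrict_apply' hA]
    refine measure_mono_null (fun s hs => ?_)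
      (measure_union_null hN' hsing :
        S.measure ({s : ℝ | s ∈ Ioo 0 t ∧ g s ≠ 0} ∪ {t}) = 0)
    obtain ⟨hgs, hsA⟩ := hs
    rcases eq_or_lt_of_le hsA.2 with heq | hlt
    · exact Or.inr heq
    · exact Or.inl ⟨⟨hsA.1, hlt⟩, hgs⟩
  have hae : ∀ᵐ s ∂(S.measure.restrict (Ioc (0:ℝ) t)),
      Set.indicator {(0:ℝ)} (fun _ => (1:ENNReal)) (g s) = 1 := by
    rw [MeasureTheory.ae_iff]
    refine measure_mono_null (fun s hs => ?_) hnull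
    simp only [mem_setOf_eq] at hs ⊢
    intro hgs
    apply hs
    rw [indicator_of_mem (by simp [hgs] : g s ∈ ({0} : Set ℝ))]
  calc ∫⁻ s in Ioc (0:ℝ) t, Set.indicator {(0:ℝ)} (fun _ => (1:ENNReal)) (g s) ∂S.measure
      = ∫⁻ _ in Ioc (0:ℝ) t, 1 ∂S.measure := lintegral_congr_ae hae
    _ = S.measure (Ioc 0 t) := by rw [setLIntegral_one]
    _ = ENNReal.ofReal (h t) := by rw [hSIoc 0 t le_rfl ht, hh0, sub_zero]
end

section
/- Let f ∈ W₀¹ and x ≥ 0. Suppose (g, h) and (g₁, h₁) are two pairs of functions in C⁺ such that for i = 1, 2: g = x + f + h and g₁ = x + f + h₁ on [0,∞); h(0) = h₁(0) = 0; h and h₁ are nondecreasing; and the Stieltjes measures dh and dh₁ are carried by {t : g(t) = 0} and {t : g₁(t) = 0} respectively. Then g(t) = g₁(t) and h(t) = h₁(t) for all t ≥ 0. -/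
open MeasureTheory Set

lemma skorohod_aux (F : ℝ → ℝ) (x : ℝ) (g h g₁ h₁ : ℝ → ℝ)
    (hg_cont : ContinuousOn g (Ici 0)) (hg₁_cont : ContinuousOn g₁ (Ici 0))
    (hg₁_nonneg : ∀ t : ℝ, 0 ≤ t → 0 ≤ g₁ t)
    (hh_nonneg : ∀ t : ℝ, 0 ≤ t → 0 ≤ h t)
    (heq : ∀ t : ℝ, 0 ≤ t → g t = x + F t + h t)
    (heq₁ : ∀ t : ℝ, 0 ≤ t → g₁ t = x + F t + h₁ t)
    (hh0 : h 0 = 0) (hh₁0 : h₁ 0 = 0)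
    (hh₁_mono : MonotoneOn h₁ (Ici 0))
    (hcarry : StieltjesCarriedOnZeros g h) :
    ∀ t : ℝ, 0 ≤ t → g t ≤ g₁ t := by
  intro t ht
  by_contra hlt
  push_neg at hlt
  let S : Set ℝ := {u ∈ Icc 0 t | g u = g₁ u}
  have hg0 : g 0 = g₁ 0 := by
    rw [heq 0 le_rfl, heq₁ 0 le_rfl, hh0, hh₁0]
  have h0S : (0 : ℝ) ∈ S := ⟨⟨le_rfl, ht⟩, hg0⟩
  have hSne : S.Nonempty := ⟨0, h0S⟩
  have hSbdd : BddAbove S := ⟨t, fun u hu => hu.1.2⟩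
  have hSclosed : IsClosed S := by
    have hc : ContinuousOn (fun u => g u - g₁ u) (Icc 0 t) :=
      (hg_cont.sub hg₁_cont).mono Icc_subset_Ici_self
    have hSeq : S = Icc 0 t ∩ (fun u => g u - g₁ u) ⁻¹' {0} := by
      ext u
      simp only [S, mem_sep_iff, mem_inter_iff, mem_preimage, mem_singleton_iff, sub_eq_zero]
    rw [hSeq]
    exact hc.preimage_isClosed_of_isClosed isClosed_Icc isClosed_singleton
  obtain ⟨s, hsS, hslub⟩ : ∃ s ∈ S, ∀ v ∈ S, v ≤ s := by
    refine ⟨sSup S, hSclosed.csSup_mem hSne hSbdd, fun v hv => le_csSup hSbdd hv⟩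
  have hs0 : 0 ≤ s := hsS.1.1
  have hsgt : g s = g₁ s := hsS.2
  have hst : s < t := lt_of_le_of_ne hsS.1.2 (by rintro rfl; exact absurd hsgt hlt.ne')
  have hne : ∀ v ∈ Ioc s t, g v ≠ g₁ v := by
    intro v hv hvv
    exact absurd (hslub v ⟨⟨hs0.trans hv.1.le, hv.2⟩, hvv⟩) (not_le.mpr hv.1)
  -- g > 0 on (s, t]
  have hpos : ∀ u ∈ Ioc s t, 0 < g u := by
    intro u hu
    have hu0 : 0 ≤ u := hs0.trans hu.1.le
    rcases lt_or_gt_of_ne (hne u hu) with hcase | hcase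
    · -- g u < g₁ u : IVT on [u, t] gives a zero of g - g₁ in (s, t], contradiction
      exfalso
      have hdc : ContinuousOn (fun v => g v - g₁ v) (Icc u t) :=
        (hg_cont.sub hg₁_cont).mono (fun v hv => hu0.trans hv.1)
      have h0mem : (0 : ℝ) ∈ Icc (g u - g₁ u) (g t - g₁ t) :=
        ⟨by linarith, by linarith⟩
      obtain ⟨v, hv, hv0⟩ := intermediate_value_Icc hu.2 hdc h0mem
      simp only [sub_eq_zero] at hv0
      exact hne v ⟨hu.1.trans_le hv.1, hv.2⟩ hv0
    · exact lt_of_le_of_lt (hg₁_nonneg u hu0) hcase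
  -- measure argument : h t = h s
  obtain ⟨μ, hμIoc, hμcar⟩ := hcarry
  have hsplit : (Ioc (0:ℝ) t) = Ioc 0 s ∪ Ioc s t := (Ioc_union_Ioc_eq_Ioc hs0 hst.le).symm
  have hzero : ∫⁻ u in Ioc s t,
      (Set.indicator {(0 : ℝ)} (fun _ => (1 : ENNReal)) (g u)) ∂μ = 0 := by
    have : ∀ u ∈ Ioc s t,
        Set.indicator {(0 : ℝ)} (fun _ => (1 : ENNReal)) (g u) = 0 := by
      intro u hu
      exact Set.indicator_of_notMem (by simpa using (hpos u hu).ne') _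
    calc ∫⁻ u in Ioc s t, (Set.indicator {(0 : ℝ)} (fun _ => (1 : ENNReal)) (g u)) ∂μ
        = ∫⁻ _ in Ioc s t, (0 : ENNReal) ∂μ :=
          setLIntegral_congr_fun measurableSet_Ioc this
      _ = 0 := lintegral_zero
  have hht : ENNReal.ofReal (h t) = ENNReal.ofReal (h s) := by
    have e1 := hμcar t ht
    have e2 := hμcar s hs0
    rw [hsplit, lintegral_union measurableSet_Ioc (Ioc_disjoint_Ioc_of_le le_rfl), e2, hzero,
      add_zero] at e1
    exact e1.symm
  have hhts : h t = h s :=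
    (ENNReal.ofReal_eq_ofReal_iff (hh_nonneg t ht) (hh_nonneg s hs0)).mp hht
  -- conclude
  have e1 := heq t ht
  have e2 := heq₁ t ht
  have e3 := heq s hs0
  have e4 := heq₁ s hs0
  have hm : h₁ s ≤ h₁ t := hh₁_mono hs0 ht hst.le
  linarith

/-- **Uniqueness in the one-dimensional Skorohod problem** (Lemma 2.2.1, uniqueness part).
If `(g, h)` and `(g₁, h₁)` are two pairs of continuous nonnegative functions on `[0,∞)`
with `g = x + f + h`, `g₁ = x + f + h₁`, `h(0) = h₁(0) = 0`, `h, h₁` nondecreasing, and the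
Stieltjes measures `dh`, `dh₁` carried by the zero sets of `g`, `g₁` respectively, then
`g = g₁` and `h = h₁` on `[0,∞)`. -/
theorem skorohod_problem_one_dim_unique (f : ℝ → ℝ) (hf : ContinuousOn f (Ici 0))
    (hf0 : f 0 = 0) (x : ℝ) (hx : 0 ≤ x) (g h g₁ h₁ : ℝ → ℝ)
    (hg_cont : ContinuousOn g (Ici 0)) (hg_nonneg : ∀ t : ℝ, 0 ≤ t → 0 ≤ g t)
    (hh_cont : ContinuousOn h (Ici 0)) (hh_nonneg : ∀ t : ℝ, 0 ≤ t → 0 ≤ h t)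
    (hg₁_cont : ContinuousOn g₁ (Ici 0)) (hg₁_nonneg : ∀ t : ℝ, 0 ≤ t → 0 ≤ g₁ t)
    (hh₁_cont : ContinuousOn h₁ (Ici 0)) (hh₁_nonneg : ∀ t : ℝ, 0 ≤ t → 0 ≤ h₁ t)
    (heq : ∀ t : ℝ, 0 ≤ t → g t = x + f t + h t)
    (heq₁ : ∀ t : ℝ, 0 ≤ t → g₁ t = x + f t + h₁ t)
    (hh0 : h 0 = 0) (hh₁0 : h₁ 0 = 0)
    (hh_mono : MonotoneOn h (Ici 0)) (hh₁_mono : MonotoneOn h₁ (Ici 0))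
    (hcarry : StieltjesCarriedOnZeros g h) (hcarry₁ : StieltjesCarriedOnZeros g₁ h₁) :
    EqOn g g₁ (Ici 0) ∧ EqOn h h₁ (Ici 0) := by
  have h1 := skorohod_aux f x g h g₁ h₁ hg_cont hg₁_cont hg₁_nonneg hh_nonneg heq heq₁
    hh0 hh₁0 hh₁_mono hcarry
  have h2 := skorohod_aux f x g₁ h₁ g h hg₁_cont hg_cont hg_nonneg hh₁_nonneg heq₁ heq
    hh₁0 hh0 hh_mono hcarry₁
  have hg : EqOn g g₁ (Ici 0) := fun t ht => le_antisymm (h1 t ht) (h2 t ht)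
  refine ⟨hg, fun t ht => ?_⟩
  have := hg ht
  have e1 := heq t ht
  have e2 := heq₁ t ht
  linarith
end

section
/- Let D be a nonempty convex open set in ℝ^d. If w : [0,∞) → ℝ^d is a step function (right-continuous, piecewise constant on a locally finite partition of [0,∞)) with w(0) ∈ D̄, then there exists a solution (X, φ) of the Skorohod equation X = w + φ for D. -/
open MeasureTheory Set Filter Topology
open scoped RealInnerProductSpace

noncomputable section

abbrev Euc (d : ℕ) := EuclideanSpace ℝ (Fin d)

set_option linter.unusedSectionVars false
set_option linter.unusedVariables false
open scoped ENNReal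

namespace SkAux
variable {d : ℕ}

open Classical in
/-- projection onto closure of a convex set, via choice. -/
def proj (D : Set (Euc d)) (y : Euc d) : Euc d :=
  if h : ∃ v, v ∈ closure D ∧ ∀ z ∈ closure D, ⟪y - v, z - v⟫ ≤ 0 then h.choose else y

theorem proj_spec {D : Set (Euc d)} (hne : D.Nonempty) (hconv : Convex ℝ D) (y : Euc d) :
    proj D y ∈ closure D ∧ ∀ z ∈ closure D, ⟪y - proj D y, z - proj D y⟫ ≤ 0 := by
  have h : ∃ v, v ∈ closure D ∧ ∀ z ∈ closure D, ⟪y - v, z - v⟫ ≤ 0 := by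
    obtain ⟨v, hv, hnorm⟩ := exists_norm_eq_iInf_of_complete_convex hne.closure
      isClosed_closure.isComplete hconv.closure y
    exact ⟨v, hv, (norm_eq_iInf_iff_real_inner_le_zero hconv.closure hv).1 hnorm⟩
  rw [proj]
  classical
  rw [dif_pos h]
  exact h.choose_spec

theorem proj_eq_of_mem_interior {D : Set (Euc d)} (hne : D.Nonempty) (hconv : Convex ℝ D)
    (hopen : IsOpen D) {y : Euc d} (hmem : proj D y ∈ D) : proj D y = y := by
  obtain ⟨hcl, hinner⟩ := proj_spec hne hconv y
  set v := proj D y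
  by_contra hne'
  have hu : y - v ≠ 0 := sub_ne_zero.2 fun h => hne' h.symm
  obtain ⟨ε, hε, hball⟩ := Metric.isOpen_iff.1 hopen v hmem
  set c : ℝ := ε / 2 / ‖y - v‖
  have hnu : 0 < ‖y - v‖ := norm_pos_iff.2 hu
  have hc : 0 < c := by positivity
  have hz : v + c • (y - v) ∈ closure D := by
    apply subset_closure
    apply hball
    rw [Metric.mem_ball, dist_eq_norm]
    have : v + c • (y - v) - v = c • (y - v) := by abel
    rw [this, norm_smul, Real.norm_eq_abs, abs_of_pos hc]
    rw [div_mul_cancel₀ _ (norm_ne_zero_iff.2 hu)]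
    linarith
  have := hinner _ hz
  have h2 : v + c • (y - v) - v = c • (y - v) := by abel
  rw [h2, real_inner_smul_right] at this
  have h3 : 0 < ⟪y - v, y - v⟫ := by
    rw [real_inner_self_eq_norm_sq]
    positivity
  nlinarith

/-! ### index function -/

open Classical in
def nidx (T : ℕ → ℝ) (t : ℝ) : ℕ :=
  if h : ∃ n, t < T (n + 1) then Nat.find h else 0

variable {T : ℕ → ℝ}

section
variable (hmono : StrictMono T) (hT0 : T 0 = 0) (htop : Tendsto T atTop atTop)
include hmono hT0 htop

theorem exists_lt_T (t : ℝ) : ∃ n, t < T (n + 1) := by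
  obtain ⟨n, hn⟩ := (htop.eventually_gt_atTop t).exists
  exact ⟨n, lt_of_lt_of_le hn (hmono.monotone (Nat.le_succ n))⟩

theorem lt_T_nidx_succ (t : ℝ) : t < T (nidx T t + 1) := by
  classical
  rw [nidx, dif_pos (exists_lt_T hmono hT0 htop t)]
  exact Nat.find_spec (exists_lt_T hmono hT0 htop t)

theorem nidx_le {t : ℝ} {k : ℕ} (h : t < T (k + 1)) : nidx T t ≤ k := by
  classical
  rw [nidx, dif_pos ⟨k, h⟩]
  exact Nat.find_min' _ h

theorem T_nidx_le {t : ℝ} (ht : 0 ≤ t) : T (nidx T t) ≤ t := by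
  classical
  rcases Nat.eq_zero_or_pos (nidx T t) with h | h
  · rw [h, hT0]; exact ht
  · by_contra hlt
    push_neg at hlt
    have h2 : nidx T t ≤ nidx T t - 1 :=
      nidx_le hmono hT0 htop (by rwa [Nat.sub_add_cancel h])
    omega

theorem nidx_mono : Monotone (nidx T) := fun s t hst =>
  nidx_le hmono hT0 htop (lt_of_le_of_lt hst (lt_T_nidx_succ hmono hT0 htop t))

theorem nidx_eq {k : ℕ} {t : ℝ} (h1 : T k ≤ t) (h2 : t < T (k + 1)) : nidx T t = k := by
  refine le_antisymm (nidx_le hmono hT0 htop h2) ?_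
  by_contra hlt
  push_neg at hlt
  exact absurd (le_trans (hmono.monotone hlt) h1) (not_le.2 (lt_T_nidx_succ hmono hT0 htop t))

theorem nidx_T (n : ℕ) : nidx T (T n) = n :=
  nidx_eq hmono hT0 htop le_rfl (hmono (Nat.lt_succ_self n))

theorem T_succ_le_iff {t : ℝ} (ht : 0 ≤ t) {k : ℕ} : T (k + 1) ≤ t ↔ k + 1 ≤ nidx T t := by
  constructor
  · intro h
    by_contra hlt
    push_neg at hlt
    exact absurd (le_trans (hmono.monotone hlt) h) (not_le.2 (lt_T_nidx_succ hmono hT0 htop t))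
  · intro h
    exact le_trans (hmono.monotone h) (T_nidx_le hmono hT0 htop ht)

theorem lt_T_succ_iff {s : ℝ} {k : ℕ} : s < T (k + 1) ↔ nidx T s ≤ k := by
  constructor
  · exact nidx_le hmono hT0 htop
  · intro h
    exact lt_of_lt_of_le (lt_T_nidx_succ hmono hT0 htop s) (hmono.monotone (by omega))

theorem mem_Ioc_iff_mem_Ico {s t : ℝ} (hs : 0 ≤ s) (hst : s ≤ t) {k : ℕ} :
    T (k + 1) ∈ Ioc s t ↔ k ∈ Finset.Ico (nidx T s) (nidx T t) := by
  rw [mem_Ioc, Finset.mem_Ico, lt_T_succ_iff hmono hT0 htop,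
    T_succ_le_iff hmono hT0 htop (le_trans hs hst)]
  omega

end

/-! ### atomic measures -/

def atomMeas (T : ℕ → ℝ) (c : ℕ → ℝ≥0∞) : Measure ℝ :=
  Measure.sum fun n => c n • Measure.dirac (T (n + 1))

open Classical in
theorem atomMeas_apply (T : ℕ → ℝ) (c : ℕ → ℝ≥0∞) {S : Set ℝ} (hS : MeasurableSet S) :
    atomMeas T c S = ∑' n, if T (n + 1) ∈ S then c n else 0 := by
  classical
  rw [atomMeas, Measure.sum_apply _ hS]
  congr 1 with n
  rw [Measure.smul_apply, Measure.dirac_apply' _ hS]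
  by_cases h : T (n + 1) ∈ S <;> simp [h]

theorem integrable_smul_dirac {f : ℝ → ℝ} {c : ℝ≥0∞} (hc : c ≠ ⊤) (x : ℝ) :
    Integrable f (c • Measure.dirac x) := by
  have hae : f =ᵐ[c • Measure.dirac x] (fun _ => f x) :=
    Measure.ae_smul_measure (p := fun τ => f τ = f x)
      (by rw [MeasureTheory.ae_dirac_eq]; exact eventually_pure.2 rfl) c
  haveI : IsFiniteMeasure (c • Measure.dirac x) :=
    ⟨by rw [Measure.smul_apply, measure_univ, smul_eq_mul, mul_one]; exact hc.lt_top⟩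
  exact (integrable_const (f x)).congr hae.symm

section
variable {T : ℕ → ℝ} (hmono : StrictMono T) (hT0 : T 0 = 0) (htop : Tendsto T atTop atTop)
include hmono hT0 htop

theorem atomMeas_Ioc (c : ℕ → ℝ≥0∞) {s t : ℝ} (hs : 0 ≤ s) (hst : s ≤ t) :
    atomMeas T c (Ioc s t) = ∑ n ∈ Finset.Ico (nidx T s) (nidx T t), c n := by
  classical
  rw [atomMeas_apply T c measurableSet_Ioc,
    tsum_eq_sum (s := Finset.Ico (nidx T s) (nidx T t)) ?_]
  · refine Finset.sum_congr rfl fun n hn => ?_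
    rw [if_pos ((mem_Ioc_iff_mem_Ico hmono hT0 htop hs hst).2 hn)]
  · intro n hn
    rw [if_neg fun h => hn ((mem_Ioc_iff_mem_Ico hmono hT0 htop hs hst).1 h)]

theorem atomMeas_Icc_lt_top {c : ℕ → ℝ≥0∞} (hc : ∀ n, c n ≠ ⊤) (t : ℝ) :
    atomMeas T c (Icc 0 t) < ⊤ := by
  classical
  rw [atomMeas_apply T c measurableSet_Icc,
    tsum_eq_sum (s := Finset.range (nidx T t)) ?_]
  · exact ENNReal.sum_lt_top.2 fun n _ => by
      split <;> simp [hc n, lt_top_iff_ne_top]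
  · intro n hn
    rw [Finset.mem_range, not_lt] at hn
    refine if_neg fun h => ?_
    have : T (n + 1) ≤ t := h.2
    have h2 : t < T (n + 1) :=
      lt_of_lt_of_le (lt_T_nidx_succ hmono hT0 htop t) (hmono.monotone (by omega))
    linarith

theorem atomMeas_restrict_Ioc (c : ℕ → ℝ≥0∞) {s t : ℝ} (hs : 0 ≤ s) (hst : s ≤ t) :
    (atomMeas T c).restrict (Ioc s t)
      = ∑ n ∈ Finset.Ico (nidx T s) (nidx T t), c n • Measure.dirac (T (n + 1)) := by
  classical
  ext S hS
  rw [Measure.restrict_apply hS, atomMeas_apply T c (hS.inter measurableSet_Ioc),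
    Measure.finset_sum_apply,
    tsum_eq_sum (s := Finset.Ico (nidx T s) (nidx T t)) ?_]
  · refine Finset.sum_congr rfl fun n hn => ?_
    have hmem : T (n + 1) ∈ Ioc s t := (mem_Ioc_iff_mem_Ico hmono hT0 htop hs hst).2 hn
    rw [Measure.smul_apply, Measure.dirac_apply' _ hS]
    by_cases h : T (n + 1) ∈ S <;> simp [h, hmem]
  · intro n hn
    refine if_neg fun h => hn ?_
    exact (mem_Ioc_iff_mem_Ico hmono hT0 htop hs hst).1 h.2

theorem integral_atomMeas_Ioc (c : ℕ → ℝ≥0∞) (hc : ∀ n, c n ≠ ⊤) (f : ℝ → ℝ) {s t : ℝ}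
    (hs : 0 ≤ s) (hst : s ≤ t) :
    ∫ τ in Ioc s t, f τ ∂(atomMeas T c)
      = ∑ n ∈ Finset.Ico (nidx T s) (nidx T t), (c n).toReal * f (T (n + 1)) := by
  rw [atomMeas_restrict_Ioc hmono hT0 htop c hs hst,
    integral_finset_sum_measure (fun n _ => integrable_smul_dirac (hc n) _)]
  refine Finset.sum_congr rfl fun n hn => ?_
  rw [integral_smul_measure, integral_dirac, smul_eq_mul]

end

/-! ### the reflected path -/

def xseq (D : Set (Euc d)) (w : ℝ → Euc d) (T : ℕ → ℝ) : ℕ → Euc d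
  | 0 => w 0
  | n + 1 => proj D (xseq D w T n + (w (T (n + 1)) - w (T n)))

def pseq (D : Set (Euc d)) (w : ℝ → Euc d) (T : ℕ → ℝ) (n : ℕ) : Euc d :=
  xseq D w T n - w (T n)

def phiF (D : Set (Euc d)) (w : ℝ → Euc d) (T : ℕ → ℝ) (t : ℝ) : Euc d :=
  pseq D w T (nidx T t)

theorem sum_Ico_nested {M : Type*} [AddCommMonoid M] (c : ℕ → M) {v : ℕ → ℕ}
    (hv : Monotone v) (m : ℕ) :
    ∑ i ∈ Finset.range m, ∑ n ∈ Finset.Ico (v i) (v (i + 1)), c n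
      = ∑ n ∈ Finset.Ico (v 0) (v m), c n := by
  induction m with
  | zero => simp
  | succ m ih =>
      rw [Finset.sum_range_succ, ih,
        Finset.sum_Ico_consecutive _ (hv (Nat.zero_le m)) (hv (Nat.le_succ m))]

theorem telescope_Ico {g : ℕ → ℝ} {j k : ℕ} (h : j ≤ k) :
    ∑ n ∈ Finset.Ico j k, (g (n + 1) - g n) = g k - g j := by
  rw [Finset.sum_Ico_eq_sub _ h, Finset.sum_range_sub, Finset.sum_range_sub]
  ring

section
variable {D : Set (Euc d)} {w : ℝ → Euc d} {T : ℕ → ℝ}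
variable (hmono : StrictMono T) (hT0 : T 0 = 0) (htop : Tendsto T atTop atTop)
include hmono hT0 htop

theorem phiF_T (k : ℕ) : phiF D w T (T k) = pseq D w T k := by
  rw [phiF, nidx_T hmono hT0 htop]

theorem evar_phiF {a b : ℝ} (ha : 0 ≤ a) (hab : a ≤ b) :
    eVariationOn (phiF D w T) (Icc a b)
      = ∑ n ∈ Finset.Ico (nidx T a) (nidx T b),
          edist (pseq D w T (n + 1)) (pseq D w T n) := by
  have hb0 : 0 ≤ b := le_trans ha hab
  apply le_antisymm
  · refine iSup_le ?_
    rintro ⟨m, u, hu, hus⟩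
    set v : ℕ → ℕ := fun i => nidx T (u i) with hv
    have hvm : Monotone v := fun i j hij => nidx_mono hmono hT0 htop (hu hij)
    calc
      ∑ i ∈ Finset.range m, edist (phiF D w T (u (i + 1))) (phiF D w T (u i))
          ≤ ∑ i ∈ Finset.range m,
              ∑ n ∈ Finset.Ico (v i) (v (i + 1)),
                edist (pseq D w T (n + 1)) (pseq D w T n) := by
            refine Finset.sum_le_sum fun i _ => ?_
            rw [phiF, phiF, edist_comm]
            refine le_trans (edist_le_Ico_sum_edist (pseq D w T) (hvm (Nat.le_succ i))) ?_
            exact le_of_eq (Finset.sum_congr rfl fun n _ => edist_comm _ _)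
      _ = ∑ n ∈ Finset.Ico (v 0) (v m),
            edist (pseq D w T (n + 1)) (pseq D w T n) := sum_Ico_nested _ hvm m
      _ ≤ ∑ n ∈ Finset.Ico (nidx T a) (nidx T b),
            edist (pseq D w T (n + 1)) (pseq D w T n) := by
            refine Finset.sum_le_sum_of_subset (Finset.Ico_subset_Ico ?_ ?_)
            · exact nidx_mono hmono hT0 htop (hus 0).1
            · exact nidx_mono hmono hT0 htop (hus m).2
  · set Na := nidx T a with hNa
    set Nb := nidx T b with hNb
    have hNab : Na ≤ Nb := nidx_mono hmono hT0 htop hab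
    set m := Nb - Na with hm
    set u : ℕ → ℝ := fun i => max a (T (min (Na + i) Nb)) with hudef
    have hu : Monotone u := fun i j hij =>
      max_le_max le_rfl (hmono.monotone (min_le_min (by omega) le_rfl))
    have hus : ∀ i, u i ∈ Icc a b := fun i =>
      ⟨le_max_left _ _, max_le hab (le_trans (hmono.monotone (min_le_right _ _))
        (T_nidx_le hmono hT0 htop hb0))⟩
    have key : ∀ i ≤ m, phiF D w T (u i) = pseq D w T (Na + i) := by
      intro i hi
      cases i with
      | zero =>
          have h1 : u 0 = a := by
            rw [hudef]
            simp only [Nat.add_zero, min_eq_left hNab]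
            exact max_eq_left (T_nidx_le hmono hT0 htop ha)
          rw [h1, phiF, Nat.add_zero]
      | succ j =>
          have hle : Na + (j + 1) ≤ Nb := by omega
          have h1 : u (j + 1) = T (Na + (j + 1)) := by
            rw [hudef]
            simp only [min_eq_left hle]
            refine max_eq_right (le_of_lt (lt_of_lt_of_le (lt_T_nidx_succ hmono hT0 htop a) ?_))
            exact hmono.monotone (by omega)
          rw [h1, phiF_T hmono hT0 htop]
    have hsum : ∑ n ∈ Finset.Ico Na Nb, edist (pseq D w T (n + 1)) (pseq D w T n)
        = ∑ i ∈ Finset.range m, edist (phiF D w T (u (i + 1))) (phiF D w T (u i)) := by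
      rw [Finset.sum_Ico_eq_sum_range]
      refine Finset.sum_congr rfl fun i hi => ?_
      rw [Finset.mem_range] at hi
      rw [key (i + 1) (by omega), key i (by omega), Nat.add_assoc]
    rw [hsum]
    exact eVariationOn.sum_le (n := m) hu hus

end

section
variable {D : Set (Euc d)} {w : ℝ → Euc d} {T : ℕ → ℝ}
variable (hne : D.Nonempty) (hconv : Convex ℝ D) (hopen : IsOpen D)
  (hw0 : w 0 ∈ closure D)
variable (hmono : StrictMono T) (hT0 : T 0 = 0) (htop : Tendsto T atTop atTop)
  (hstepw : ∀ n : ℕ, ∀ t ∈ Ico (T n) (T (n + 1)), w t = w (T n))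

include hne hconv hw0 in
theorem xseq_mem (n : ℕ) : xseq D w T n ∈ closure D := by
  cases n with
  | zero => exact hw0
  | succ n => exact (proj_spec hne hconv _).1

include hmono hT0 htop in
theorem X_T (k : ℕ) : w (T k) + phiF D w T (T k) = xseq D w T k := by
  rw [phiF_T hmono hT0 htop, pseq]
  abel

include hmono hT0 htop hstepw in
theorem X_eq {t : ℝ} (ht : 0 ≤ t) :
    w t + phiF D w T t = xseq D w T (nidx T t) := by
  have hw : w t = w (T (nidx T t)) :=
    hstepw (nidx T t) t ⟨T_nidx_le hmono hT0 htop ht, lt_T_nidx_succ hmono hT0 htop t⟩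
  rw [phiF, pseq, hw]
  abel

theorem jump_eq (n : ℕ) :
    pseq D w T (n + 1) - pseq D w T n
      = xseq D w T (n + 1) - (xseq D w T n + (w (T (n + 1)) - w (T n))) := by
  simp only [pseq]
  abel

include hne hconv hopen in
theorem jump_zero_of_mem (n : ℕ) (h : xseq D w T (n + 1) ∈ D) :
    pseq D w T (n + 1) = pseq D w T n := by
  have hx : xseq D w T (n + 1) = proj D (xseq D w T n + (w (T (n + 1)) - w (T n))) := rfl
  have hproj := proj_eq_of_mem_interior hne hconv hopen (hx ▸ h)
  have := jump_eq (D := D) (w := w) (T := T) n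
  rw [hx, hproj] at this
  have h2 : pseq D w T (n + 1) - pseq D w T n = 0 := by rw [this]; abel
  exact sub_eq_zero.1 h2

include hne hconv in
theorem inner_jump_nonneg (n : ℕ) {z : Euc d} (hz : z ∈ closure D) :
    0 ≤ ⟪z - xseq D w T (n + 1), pseq D w T (n + 1) - pseq D w T n⟫ := by
  set y := xseq D w T n + (w (T (n + 1)) - w (T n)) with hy
  have hx : xseq D w T (n + 1) = proj D y := rfl
  have hinner := (proj_spec hne hconv y).2 z hz
  have hje : pseq D w T (n + 1) - pseq D w T n = proj D y - y := by
    rw [jump_eq, hx]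
  rw [hje, hx]
  have : ⟪z - proj D y, proj D y - y⟫ = -⟪y - proj D y, z - proj D y⟫ := by
    rw [real_inner_comm]
    rw [show proj D y - y = -(y - proj D y) by abel, inner_neg_left]
  rw [this]
  linarith

include hmono hT0 htop in
theorem eventually_right {t : ℝ} (ht : 0 ≤ t) :
    ∀ᶠ u in 𝓝[≥] t, nidx T u = nidx T t ∧ 0 ≤ u := by
  have hmem : Ico t (T (nidx T t + 1)) ∈ 𝓝[≥] t :=
    Ico_mem_nhdsGE_of_mem ⟨le_refl t, lt_T_nidx_succ hmono hT0 htop t⟩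
  filter_upwards [hmem] with u hu
  exact ⟨nidx_eq hmono hT0 htop (le_trans (T_nidx_le hmono hT0 htop ht) hu.1) hu.2,
    le_trans ht hu.1⟩

include hmono hT0 htop in
theorem eventually_left {t : ℝ} (ht : 0 < t) :
    ∃ k, ∀ᶠ u in 𝓝[<] t, nidx T u = k ∧ 0 ≤ u := by
  have hTle : T (nidx T t) ≤ t := T_nidx_le hmono hT0 htop ht.le
  rcases lt_or_eq_of_le hTle with hlt | heq
  · refine ⟨nidx T t, ?_⟩
    have hmem : Ioo (T (nidx T t)) t ∈ 𝓝[<] t := Ioo_mem_nhdsLT_of_mem ⟨hlt, le_refl t⟩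
    filter_upwards [hmem] with u hu
    have h0 : (0 : ℝ) ≤ T (nidx T t) := by
      rw [← hT0]; exact hmono.monotone (Nat.zero_le _)
    refine ⟨nidx_eq hmono hT0 htop hu.1.le
      (lt_trans hu.2 (lt_T_nidx_succ hmono hT0 htop t)), le_trans h0 hu.1.le⟩
  · have hpos : 0 < nidx T t := by
      rcases Nat.eq_zero_or_pos (nidx T t) with h | h
      · exfalso; rw [h, hT0] at heq; exact absurd heq.symm (ne_of_gt ht)
      · exact h
    refine ⟨nidx T t - 1, ?_⟩
    have hlt2 : T (nidx T t - 1) < t := by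
      have h' : T (nidx T t - 1) < T (nidx T t) := hmono (Nat.sub_lt hpos one_pos)
      linarith
    have hmem : Ioo (T (nidx T t - 1)) t ∈ 𝓝[<] t := Ioo_mem_nhdsLT_of_mem ⟨hlt2, le_refl t⟩
    filter_upwards [hmem] with u hu
    have h0 : (0 : ℝ) ≤ T (nidx T t - 1) := by
      rw [← hT0]; exact hmono.monotone (Nat.zero_le _)
    refine ⟨nidx_eq hmono hT0 htop hu.1.le ?_, le_trans h0 hu.1.le⟩
    rw [Nat.sub_add_cancel hpos, heq]
    exact hu.2

end

theorem max_sub_max_neg (a : ℝ) : max a 0 - max (-a) 0 = a := by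
  rcases le_total a 0 with h | h
  · rw [max_eq_right h, max_eq_left (neg_nonneg.2 h)]; ring
  · rw [max_eq_left h, max_eq_right (neg_nonpos.2 h)]; ring

end SkAux

/-- Measure data representing the Lebesgue–Stieltjes measures `dφ` (componentwise, as a
difference of locally finite nonnegative measures) and `d|φ|` (the total variation measure)
of a function `φ : [0,∞) → ℝ^d` of locally bounded variation. -/
structure BVMeasureData (d : ℕ) (φ : ℝ → Euc d) where
  pos : Fin d → Measure ℝ
  neg : Fin d → Measure ℝ
  var : Measure ℝ
  pos_fin : ∀ i : Fin d, ∀ t : ℝ, pos i (Icc 0 t) < ⊤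
  neg_fin : ∀ i : Fin d, ∀ t : ℝ, neg i (Icc 0 t) < ⊤
  increments : ∀ i : Fin d, ∀ s t : ℝ, 0 ≤ s → s ≤ t →
    (pos i (Ioc s t)).toReal - (neg i (Ioc s t)).toReal = φ t i - φ s i
  var_eq : ∀ s t : ℝ, 0 ≤ s → s ≤ t → var (Ioc s t) = eVariationOn φ (Icc s t)

/-- The Stieltjes integral `∫_{(s,t]} ⟨f(τ), dφ(τ)⟩`. -/
def BVMeasureData.pairing {d : ℕ} {φ : ℝ → Euc d} (M : BVMeasureData d φ)
    (f : ℝ → Euc d) (s t : ℝ) : ℝ :=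
  ∑ i : Fin d, ((∫ τ in Ioc s t, f τ i ∂(M.pos i)) - ∫ τ in Ioc s t, f τ i ∂(M.neg i))

/-- `f` is right-continuous at every `t ≥ 0`. -/
def RightContinuousOnNonneg {E : Type*} [TopologicalSpace E] (f : ℝ → E) : Prop :=
  ∀ t : ℝ, 0 ≤ t → ContinuousWithinAt f (Ici t) t

/-- `f` has left limits at every `t > 0`. -/
def HasLeftLimitsOnPos {E : Type*} [TopologicalSpace E] (f : ℝ → E) : Prop :=
  ∀ t : ℝ, 0 < t → ∃ L, Tendsto f (𝓝[<] t) (𝓝 L)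

/-- `φ` is associated with `X` (relative to the convex domain `D`):
`φ` is rcll of locally bounded variation with `φ(0) = 0`, the measure `d|φ|` does not
charge `{t ≥ 0 : X(t) ∈ D}`, and `∫_{(s,t]} ⟨η(τ) − X(τ), dφ(τ)⟩ ≥ 0` for every
continuous `η : [0,∞) → closure D`. -/
structure IsAssociated {d : ℕ} (D : Set (Euc d)) (X : ℝ → Euc d) (φ : ℝ → Euc d)
    (M : BVMeasureData d φ) : Prop where
  rightCont : RightContinuousOnNonneg φ
  leftLim : HasLeftLimitsOnPos φ
  bv : ∀ t : ℝ, 0 ≤ t → eVariationOn φ (Icc 0 t) < ⊤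
  init : φ 0 = 0
  carried : M.var {t : ℝ | 0 ≤ t ∧ X t ∈ D} = 0
  normal : ∀ η : ℝ → Euc d, Continuous η → (∀ t : ℝ, 0 ≤ t → η t ∈ closure D) →
    ∀ s t : ℝ, 0 ≤ s → s ≤ t → 0 ≤ M.pairing (fun τ => η τ - X τ) s t

/-- `(X, φ)` (with measure data `M` for `φ`) solves the Skorohod equation `X = w + φ`
for the domain `D`. -/
structure IsSkorohodSolution {d : ℕ} (D : Set (Euc d)) (w X φ : ℝ → Euc d)
    (M : BVMeasureData d φ) : Prop where
  rightCont : RightContinuousOnNonneg X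
  leftLim : HasLeftLimitsOnPos X
  mem : ∀ t : ℝ, 0 ≤ t → X t ∈ closure D
  eqn : ∀ t : ℝ, 0 ≤ t → X t = w t + φ t
  assoc : IsAssociated D X φ M


/-- `w` is a step function: right-continuous and piecewise constant on a locally finite
partition `0 = T₀ < T₁ < T₂ < ⋯ → ∞` of `[0,∞)`. -/
def IsStepFunction {E : Type*} (w : ℝ → E) : Prop :=
  ∃ T : ℕ → ℝ, StrictMono T ∧ T 0 = 0 ∧ Tendsto T atTop atTop ∧
    ∀ n : ℕ, ∀ t ∈ Ico (T n) (T (n + 1)), w t = w (T n)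

/-- **Lemma 4.1.1.** If `D ⊆ ℝ^d` is a nonempty convex open set and `w` is a step function
with `w(0) ∈ closure D`, then the Skorohod equation `X = w + φ` has a solution. -/
theorem skorohod_exists_of_step {d : ℕ} (D : Set (Euc d)) (hne : D.Nonempty)
    (hconv : Convex ℝ D) (hopen : IsOpen D) (w : ℝ → Euc d)
    (hstep : IsStepFunction w) (hw0 : w 0 ∈ closure D) :
    ∃ (X φ : ℝ → Euc d) (M : BVMeasureData d φ), IsSkorohodSolution D w X φ M := by
  classical
  obtain ⟨T, hmono, hT0, htop, hstepw⟩ := hstep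
  set P : ℕ → Euc d := SkAux.pseq D w T with hP
  set φ : ℝ → Euc d := SkAux.phiF D w T with hφ
  set X : ℝ → Euc d := fun t => w t + SkAux.phiF D w T t with hXdef
  have hXT : ∀ k, X (T k) = SkAux.xseq D w T k := fun k => SkAux.X_T hmono hT0 htop k
  have hXeq : ∀ t : ℝ, 0 ≤ t → X t = SkAux.xseq D w T (SkAux.nidx T t) :=
    fun t ht => SkAux.X_eq hmono hT0 htop hstepw ht
  set Mpos : Fin d → Measure ℝ := fun i =>
    SkAux.atomMeas T (fun n => ENNReal.ofReal (P (n + 1) i - P n i)) with hMpos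
  set Mneg : Fin d → Measure ℝ := fun i =>
    SkAux.atomMeas T (fun n => ENNReal.ofReal (P n i - P (n + 1) i)) with hMneg
  set Mvar : Measure ℝ := SkAux.atomMeas T (fun n => edist (P (n + 1)) (P n)) with hMvar
  refine ⟨X, φ, ⟨Mpos, Mneg, Mvar, ?_, ?_, ?_, ?_⟩, ?_, ?_, ?_, ?_, ?_⟩
  · -- pos_fin
    intro i t
    exact SkAux.atomMeas_Icc_lt_top hmono hT0 htop (fun n => ENNReal.ofReal_ne_top) t
  · -- neg_fin
    intro i t
    exact SkAux.atomMeas_Icc_lt_top hmono hT0 htop (fun n => ENNReal.ofReal_ne_top) t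
  · -- increments
    intro i s t hs hst
    show (Mpos i (Ioc s t)).toReal - (Mneg i (Ioc s t)).toReal = φ t i - φ s i
    rw [hMpos, hMneg]
    rw [SkAux.atomMeas_Ioc hmono hT0 htop _ hs hst,
      SkAux.atomMeas_Ioc hmono hT0 htop _ hs hst,
      ENNReal.toReal_sum (fun n _ => ENNReal.ofReal_ne_top),
      ENNReal.toReal_sum (fun n _ => ENNReal.ofReal_ne_top), ← Finset.sum_sub_distrib]
    have hcong : ∀ n ∈ Finset.Ico (SkAux.nidx T s) (SkAux.nidx T t),
        (ENNReal.ofReal (P (n + 1) i - P n i)).toReal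
          - (ENNReal.ofReal (P n i - P (n + 1) i)).toReal
        = (fun k => P k i) (n + 1) - (fun k => P k i) n := by
      intro n _
      rw [ENNReal.toReal_ofReal', ENNReal.toReal_ofReal',
        show P n i - P (n + 1) i = -(P (n + 1) i - P n i) by ring,
        SkAux.max_sub_max_neg]
    rw [Finset.sum_congr rfl hcong,
      SkAux.telescope_Ico (g := fun k => P k i) (SkAux.nidx_mono hmono hT0 htop hst)]
    rfl
  · -- var_eq
    intro s t hs hst
    show Mvar (Ioc s t) = eVariationOn φ (Icc s t)
    rw [hMvar, SkAux.atomMeas_Ioc hmono hT0 htop _ hs hst]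
    exact (SkAux.evar_phiF hmono hT0 htop hs hst).symm
  · -- rightCont X
    intro t ht
    have hta : X t = SkAux.xseq D w T (SkAux.nidx T t) := hXeq t ht
    refine Filter.Tendsto.congr' ?_ tendsto_const_nhds
    filter_upwards [SkAux.eventually_right hmono hT0 htop ht] with u hu
    rw [hta, hXeq u hu.2, hu.1]
  · -- leftLim X
    intro t ht
    obtain ⟨k, hev⟩ := SkAux.eventually_left hmono hT0 htop ht
    refine ⟨SkAux.xseq D w T k, Filter.Tendsto.congr' ?_ tendsto_const_nhds⟩
    filter_upwards [hev] with u hu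
    rw [hXeq u hu.2, hu.1]
  · -- mem
    intro t ht
    rw [hXeq t ht]
    exact SkAux.xseq_mem hne hconv hw0 _
  · -- eqn
    intro t ht
    rfl
  · -- assoc
    refine ⟨?_, ?_, ?_, ?_, ?_, ?_⟩
    · -- rightCont φ
      intro t ht
      refine Filter.Tendsto.congr' ?_ tendsto_const_nhds
      filter_upwards [SkAux.eventually_right hmono hT0 htop ht] with u hu
      show φ t = φ u
      rw [hφ]
      simp only [SkAux.phiF, hu.1]
    · -- leftLim φ
      intro t ht
      obtain ⟨k, hev⟩ := SkAux.eventually_left hmono hT0 htop ht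
      refine ⟨P k, Filter.Tendsto.congr' ?_ tendsto_const_nhds⟩
      filter_upwards [hev] with u hu
      show P k = φ u
      rw [hφ, hP]
      simp only [SkAux.phiF, hu.1]
    · -- bv
      intro t ht
      rw [hφ, SkAux.evar_phiF hmono hT0 htop le_rfl ht]
      exact ENNReal.sum_lt_top.2 fun n _ => edist_lt_top _ _
    · -- init
      show φ 0 = 0
      rw [hφ, SkAux.phiF, show (0 : ℝ) = T 0 from hT0.symm,
        SkAux.nidx_T hmono hT0 htop, SkAux.pseq]
      show SkAux.xseq D w T 0 - w (T 0) = 0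
      rw [show SkAux.xseq D w T 0 = w 0 from rfl, hT0, sub_self]
    · -- carried
      set C : Set ℝ :=
        ⋂ n : ℕ, (if P (n + 1) = P n then (univ : Set ℝ) else ({T (n + 1)}ᶜ)) with hC
      have hCm : MeasurableSet C := MeasurableSet.iInter fun n => by
        split
        · exact MeasurableSet.univ
        · exact (measurableSet_singleton _).compl
      have hC0 : Mvar C = 0 := by
        rw [hMvar, SkAux.atomMeas_apply T _ hCm]
        refine ENNReal.tsum_eq_zero.2 fun n => ?_
        split_ifs with h
        · by_cases he : P (n + 1) = P n
          · rw [he, edist_self]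
          · exfalso
            have hm := mem_iInter.1 h n
            rw [if_neg he] at hm
            exact hm rfl
        · rfl
      refine measure_mono_null ?_ hC0
      rintro τ ⟨hτ0, hτD⟩
      refine mem_iInter.2 fun n => ?_
      split_ifs with he
      · trivial
      · simp only [mem_compl_iff, mem_singleton_iff]
        intro hmem
        apply he
        refine SkAux.jump_zero_of_mem hne hconv hopen n ?_
        rw [← hXT (n + 1), ← hmem]
        exact hτD
    · -- normal
      intro η hη hηcl s t hs hst
      have hT1pos : ∀ n : ℕ, (0 : ℝ) ≤ T (n + 1) := fun n => by
        rw [← hT0]; exact hmono.monotone (Nat.zero_le _)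
      have key : ∀ n ∈ Finset.Ico (SkAux.nidx T s) (SkAux.nidx T t),
          (0 : ℝ) ≤ ∑ i : Fin d, (P (n + 1) i - P n i) * ((η (T (n + 1)) - X (T (n + 1))) i) := by
        intro n _
        have h2 := SkAux.inner_jump_nonneg hne hconv (w := w) (T := T) n
          (hηcl (T (n + 1)) (hT1pos n))
        rw [PiLp.inner_apply] at h2
        simp only [RCLike.inner_apply, conj_trivial, PiLp.sub_apply] at h2 ⊢
        rw [hXT (n + 1)]
        have h3 : ∑ i : Fin d,
            (η (T (n + 1)) i - SkAux.xseq D w T (n + 1) i) * (P (n + 1) i - P n i)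
            = ∑ i : Fin d,
              (P (n + 1) i - P n i) * (η (T (n + 1)) i - SkAux.xseq D w T (n + 1) i) :=
          Finset.sum_congr rfl fun i _ => mul_comm _ _
        exact h2
      have hpos' : ∀ i : Fin d,
          ∫ τ in Ioc s t, (η τ - X τ) i ∂(Mpos i)
            = ∑ n ∈ Finset.Ico (SkAux.nidx T s) (SkAux.nidx T t),
                max (P (n + 1) i - P n i) 0 * ((η (T (n + 1)) - X (T (n + 1))) i) := by
        intro i
        rw [hMpos, SkAux.integral_atomMeas_Ioc hmono hT0 htop _
          (fun n => ENNReal.ofReal_ne_top) _ hs hst]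
        exact Finset.sum_congr rfl fun n _ => by rw [ENNReal.toReal_ofReal']
      have hneg' : ∀ i : Fin d,
          ∫ τ in Ioc s t, (η τ - X τ) i ∂(Mneg i)
            = ∑ n ∈ Finset.Ico (SkAux.nidx T s) (SkAux.nidx T t),
                max (P n i - P (n + 1) i) 0 * ((η (T (n + 1)) - X (T (n + 1))) i) := by
        intro i
        rw [hMneg, SkAux.integral_atomMeas_Ioc hmono hT0 htop _
          (fun n => ENNReal.ofReal_ne_top) _ hs hst]
        exact Finset.sum_congr rfl fun n _ => by rw [ENNReal.toReal_ofReal']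
      have hrw : ∑ i : Fin d, ((∫ τ in Ioc s t, (η τ - X τ) i ∂(Mpos i))
            - ∫ τ in Ioc s t, (η τ - X τ) i ∂(Mneg i))
          = ∑ n ∈ Finset.Ico (SkAux.nidx T s) (SkAux.nidx T t),
              ∑ i : Fin d, (P (n + 1) i - P n i) * ((η (T (n + 1)) - X (T (n + 1))) i) := by
        refine Eq.trans (Finset.sum_congr rfl fun i _ => ?_) Finset.sum_comm
        rw [hpos' i, hneg' i, ← Finset.sum_sub_distrib]
        refine Finset.sum_congr rfl fun n _ => ?_
        rw [← sub_mul, show P n i - P (n + 1) i = -(P (n + 1) i - P n i) by ring,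
          SkAux.max_sub_max_neg]
      show (0 : ℝ) ≤ ∑ i : Fin d, ((∫ τ in Ioc s t, (η τ - X τ) i ∂(Mpos i))
        - ∫ τ in Ioc s t, (η τ - X τ) i ∂(Mneg i))
      rw [hrw]
      exact Finset.sum_nonneg key

end
end

section
/- Let D be a nonempty convex open set in ℝ^d, let w, w̃ : [0,∞) → ℝ^d be right-continuous with left limits with w(0), w̃(0) ∈ D̄, and let (X, φ) and (X̃, φ̃) be solutions of the Skorohod equations X = w + φ and X̃ = w̃ + φ̃ respectively. Then for all t ≥ 0: |X(t) − X̃(t)|² ≤ |w(t) − w̃(t)|² + 2 ∫_{(0,t]} ⟨w(t) − w̃(t) − w(s) + w̃(s), dφ(s) − dφ̃(s)⟩. -/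
open MeasureTheory Set Filter Topology
open scoped RealInnerProductSpace

noncomputable section

section Helpers

variable {d : ℕ}

/-- A coordinate of a Euclidean vector is bounded by its norm. -/
lemma coord_le_norm (x : Euc d) (i : Fin d) : |x i| ≤ ‖x‖ := by
  rw [EuclideanSpace.norm_eq, ← Real.sqrt_sq_eq_abs (x i)]
  apply Real.sqrt_le_sqrt
  have h : x i ^ 2 = ‖x i‖ ^ 2 := by rw [Real.norm_eq_abs, sq_abs]
  rw [h]
  exact Finset.single_le_sum (f := fun j => ‖x j‖ ^ 2) (fun j _ => by positivity)
    (Finset.mem_univ i)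

/-- A right-continuous function into `Euc d` is measurable. -/
lemma measurable_of_rc {g : ℝ → Euc d} (hg : ∀ s, ContinuousWithinAt g (Ici s) s) :
    Measurable g := by
  have key : ∀ n : ℕ, Measurable (fun s : ℝ => g ((⌈(2 ^ n : ℝ) * s⌉ : ℝ) / 2 ^ n)) := by
    intro n
    have h1 : Measurable (fun s : ℝ => (⌈(2 ^ n : ℝ) * s⌉ : ℤ)) := by
      apply measurable_to_countable'
      intro k
      have heq : (fun s : ℝ => (⌈(2 ^ n : ℝ) * s⌉ : ℤ)) ⁻¹' {k}
          = (fun s : ℝ => (2 ^ n : ℝ) * s) ⁻¹' Ioc ((k : ℝ) - 1) (k : ℝ) := by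
        ext s
        simp only [mem_preimage, mem_singleton_iff, mem_Ioc, Int.ceil_eq_iff]
      rw [heq]
      exact (measurable_const_mul _) measurableSet_Ioc
    exact (measurable_from_top (f := fun k : ℤ => g ((k : ℝ) / 2 ^ n))).comp h1
  apply measurable_of_tendsto_metrizable key
  rw [tendsto_pi_nhds]
  intro s
  have hle : ∀ n : ℕ, s ≤ (⌈(2 ^ n : ℝ) * s⌉ : ℝ) / 2 ^ n := by
    intro n
    have hpos : (0 : ℝ) < 2 ^ n := by positivity
    rw [le_div_iff₀ hpos]
    calc s * 2 ^ n = 2 ^ n * s := by ring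
    _ ≤ _ := Int.le_ceil _
  have hlt : ∀ n : ℕ, (⌈(2 ^ n : ℝ) * s⌉ : ℝ) / 2 ^ n ≤ s + (1 / 2) ^ n := by
    intro n
    have hpos : (0 : ℝ) < 2 ^ n := by positivity
    rw [div_le_iff₀ hpos]
    have hc := (Int.ceil_lt_add_one ((2 ^ n : ℝ) * s)).le
    calc (⌈(2 ^ n : ℝ) * s⌉ : ℝ) ≤ 2 ^ n * s + 1 := hc
    _ = (s + (1 / 2) ^ n) * 2 ^ n := by
        field_simp
        rw [mul_add, ← mul_pow, show (2:ℝ)*(1/2) = 1 by norm_num, one_pow]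
  have htend : Tendsto (fun n : ℕ => (⌈(2 ^ n : ℝ) * s⌉ : ℝ) / 2 ^ n) atTop (𝓝 s) := by
    have h2 : Tendsto (fun n : ℕ => s + (1 / 2 : ℝ) ^ n) atTop (𝓝 (s + 0)) :=
      tendsto_const_nhds.add (tendsto_pow_atTop_nhds_zero_of_lt_one (by norm_num) (by norm_num))
    rw [add_zero] at h2
    exact tendsto_of_tendsto_of_tendsto_of_le_of_le tendsto_const_nhds h2 hle hlt
  have htend' : Tendsto (fun n : ℕ => (⌈(2 ^ n : ℝ) * s⌉ : ℝ) / 2 ^ n) atTop (𝓝[Ici s] s) :=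
    tendsto_nhdsWithin_of_tendsto_nhds_of_eventually_within _ htend
      (Eventually.of_forall fun n => hle n)
  exact (hg s).tendsto.comp htend'

lemma exists_bound_Icc {g : ℝ → Euc d} (hrc : ∀ s, ContinuousWithinAt g (Ici s) s)
    (hll : ∀ s : ℝ, 0 < s → ∃ L, Tendsto g (𝓝[<] s) (𝓝 L)) (T : ℝ) :
    ∃ B : ℝ, ∀ s ∈ Icc (0 : ℝ) T, ‖g s‖ ≤ B := by
  have key : ∀ s ∈ Icc (0 : ℝ) T, ∃ C : ℝ,
      {u : ℝ | u ∈ Icc (0 : ℝ) T → ‖g u‖ ≤ C} ∈ 𝓝 s := by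
    intro s hs
    have hr : ∀ᶠ u in 𝓝[≥] s, ‖g u‖ ≤ ‖g s‖ + 1 := by
      have h := ((hrc s).tendsto.norm).eventually_lt_const (lt_add_one ‖g s‖)
      exact h.mono fun u hu => hu.le
    rcases eq_or_lt_of_le hs.1 with h0 | h0
    · refine ⟨‖g s‖ + 1, ?_⟩
      rw [← nhdsLT_sup_nhdsGE s, mem_sup]
      constructor
      · filter_upwards [self_mem_nhdsWithin] with u hu
        intro hmem
        exact absurd hmem.1 (by simp only [mem_Iio] at hu; rw [← h0] at hu; linarith)
      · filter_upwards [hr] with u hu _; exact hu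
    · obtain ⟨L, hL⟩ := hll s h0
      have hl : ∀ᶠ u in 𝓝[<] s, ‖g u‖ ≤ ‖L‖ + 1 := by
        have h := (hL.norm).eventually_lt_const (lt_add_one ‖L‖)
        exact h.mono fun u hu => hu.le
      refine ⟨max (‖g s‖ + 1) (‖L‖ + 1), ?_⟩
      rw [← nhdsLT_sup_nhdsGE s, mem_sup]
      constructor
      · filter_upwards [hl] with u hu _; exact hu.trans (le_max_right _ _)
      · filter_upwards [hr] with u hu _; exact hu.trans (le_max_left _ _)
  choose! C hC using key
  obtain ⟨t, hts, hcover⟩ := (isCompact_Icc (a := (0:ℝ)) (b := T)).elim_nhds_subcover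
    (fun s => {u : ℝ | u ∈ Icc (0 : ℝ) T → ‖g u‖ ≤ C s}) hC
  obtain ⟨B, hB⟩ := (t.image C).exists_le
  refine ⟨B, fun s hs => ?_⟩
  obtain ⟨x, hxt, hx⟩ := mem_iUnion₂.1 (hcover hs)
  exact (hx hs).trans (hB _ (Finset.mem_image_of_mem C hxt))

/-- clamp to `[0, T]` -/
def clampTo (T u : ℝ) : ℝ := min (max u 0) T

lemma clampTo_mem {T : ℝ} (hT : 0 ≤ T) (u : ℝ) : clampTo T u ∈ Icc (0 : ℝ) T :=
  ⟨le_min (le_max_right _ _) hT, min_le_right _ _⟩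

lemma clampTo_of_mem {T u : ℝ} (hu : u ∈ Icc (0 : ℝ) T) : clampTo T u = u := by
  simp only [clampTo, max_eq_left hu.1, min_eq_left hu.2]

lemma clampTo_monotone {T : ℝ} : Monotone (clampTo T) := fun _ _ hab =>
  min_le_min (max_le_max hab le_rfl) le_rfl

lemma clampTo_continuous {T : ℝ} : Continuous (clampTo T) :=
  (continuous_id.max continuous_const).min continuous_const

lemma rc_clamp {f : ℝ → Euc d} (hf : RightContinuousOnNonneg f) {T : ℝ} (hT : 0 ≤ T) :
    ∀ s, ContinuousWithinAt (fun u => f (clampTo T u)) (Ici s) s := by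
  intro s
  have h1 : ContinuousWithinAt f (Ici (clampTo T s)) (clampTo T s) :=
    hf _ (clampTo_mem hT s).1
  have h2 : ContinuousWithinAt (clampTo T) (Ici s) s := clampTo_continuous.continuousWithinAt
  exact h1.comp h2 fun u hu => clampTo_monotone hu

lemma ll_clamp {f : ℝ → Euc d} (hf : HasLeftLimitsOnPos f) {T : ℝ} (hT : 0 ≤ T) :
    ∀ s : ℝ, 0 < s → ∃ L, Tendsto (fun u => f (clampTo T u)) (𝓝[<] s) (𝓝 L) := by
  intro s hs
  by_cases hsT : s ≤ T
  · obtain ⟨L, hL⟩ := hf s hs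
    refine ⟨L, hL.congr' ?_⟩
    filter_upwards [Ioo_mem_nhdsLT_of_mem (show s ∈ Ioc (0:ℝ) s from ⟨hs, le_rfl⟩)] with u hu
    rw [clampTo_of_mem ⟨hu.1.le, hu.2.le.trans hsT⟩]
  · push_neg at hsT
    refine ⟨f T, (tendsto_const_nhds : Tendsto (fun _ : ℝ => f T) _ _).congr' ?_⟩
    filter_upwards [Ioo_mem_nhdsLT_of_mem (show s ∈ Ioc T s from ⟨hsT, le_rfl⟩)] with u hu
    have : clampTo T u = T := by
      simp only [clampTo, max_eq_left (hT.trans hu.1.le), min_eq_right hu.1.le]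
    rw [this]

lemma exists_bound_of_rcll {f : ℝ → Euc d} (hrc : RightContinuousOnNonneg f)
    (hll : HasLeftLimitsOnPos f) {T : ℝ} (hT : 0 ≤ T) :
    ∃ B : ℝ, (∀ u ∈ Icc (0 : ℝ) T, ‖f u‖ ≤ B) ∧ ∀ u : ℝ, ‖f (clampTo T u)‖ ≤ B := by
  obtain ⟨B, hB⟩ := exists_bound_Icc (g := fun u => f (clampTo T u)) (rc_clamp hrc hT)
    (ll_clamp hll hT) T
  refine ⟨B, fun u hu => ?_, fun u => ?_⟩
  · have := hB u hu; rwa [clampTo_of_mem hu] at this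
  · have := hB (clampTo T u) (clampTo_mem hT u)
    rwa [clampTo_of_mem (clampTo_mem hT u)] at this

/-- Integrability of a bounded a.e.-strongly measurable function on a finite-measure set. -/
lemma integrableOn_of_bound {E : Type*} [NormedAddCommGroup E] (μ : Measure ℝ) {s : Set ℝ}
    (hs : μ s < ⊤) {g : ℝ → E} (hm : AEStronglyMeasurable g (μ.restrict s)) {B : ℝ}
    (hb : ∀ u, ‖g u‖ ≤ B) : IntegrableOn g s μ := by
  haveI : IsFiniteMeasure (μ.restrict s) := ⟨by rwa [Measure.restrict_apply_univ]⟩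
  exact ⟨hm, HasFiniteIntegral.of_bounded (Eventually.of_forall hb)⟩

/-- Core quadratic inequality for a signed density against a finite measure. -/
lemma core_quad (ρ : Measure ℝ) [IsFiniteMeasure ρ] {γ : ℝ → ℝ}
    (hγi : Integrable γ ρ) :
    Integrable (fun v => γ v * (∫ u in Iic v, γ u ∂ρ)) ρ ∧
    (∫ v, γ v ∂ρ) ^ 2 ≤ 2 * ∫ v, γ v * (∫ u in Iic v, γ u ∂ρ) ∂ρ := by
  set F : ℝ × ℝ → ℝ := fun p => γ p.1 * γ p.2 with hFdef
  have hF : Integrable F (ρ.prod ρ) := hγi.mul_prod hγi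
  set S : Set (ℝ × ℝ) := {p : ℝ × ℝ | p.1 ≤ p.2} with hSdef
  have hS : MeasurableSet S := measurableSet_le measurable_fst measurable_snd
  have hFS : Integrable (S.indicator F) (ρ.prod ρ) := hF.indicator hS
  have hFSc : Integrable (Sᶜ.indicator F) (ρ.prod ρ) := hF.indicator hS.compl
  set a : ℝ → ℝ := fun v => (∫ u in Iic v, γ u ∂ρ) * γ v with hadef
  set b : ℝ → ℝ := fun u => γ u * ∫ v in Iio u, γ v ∂ρ with hbdef
  have hsecS : ∀ (v u : ℝ), S.indicator F (u, v) = (Iic v).indicator (fun u => γ u * γ v) u := by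
    intro v u
    simp only [Set.indicator_apply, hSdef, mem_setOf_eq, mem_Iic, hFdef]
  have hsecSc : ∀ (u v : ℝ), Sᶜ.indicator F (u, v) = (Iio u).indicator (fun v => γ u * γ v) v := by
    intro u v
    simp only [Set.indicator_apply, mem_compl_iff, hSdef, mem_setOf_eq, mem_Iio, not_le, hFdef]
  have hA : ∫ p, S.indicator F p ∂(ρ.prod ρ) = ∫ v, a v ∂ρ := by
    rw [integral_prod_symm _ hFS]
    congr 1; funext v
    simp only [hsecS]
    rw [integral_indicator measurableSet_Iic, integral_mul_const]
  have hAc : ∫ p, Sᶜ.indicator F p ∂(ρ.prod ρ) = ∫ u, b u ∂ρ := by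
    rw [integral_prod _ hFSc]
    congr 1; funext u
    simp only [hsecSc]
    rw [integral_indicator measurableSet_Iio, integral_const_mul]
  have ha_int : Integrable a ρ := by
    have h := hFS.integral_prod_right
    refine h.congr (Eventually.of_forall fun v => ?_)
    simp only [hsecS]
    rw [integral_indicator measurableSet_Iic, integral_mul_const]
  have hb_int : Integrable b ρ := by
    have h := hFSc.integral_prod_left
    refine h.congr (Eventually.of_forall fun u => ?_)
    simp only [hsecSc]
    rw [integral_indicator measurableSet_Iio, integral_const_mul]
  have hsum : ∫ v, a v ∂ρ + ∫ u, b u ∂ρ = (∫ v, γ v ∂ρ) ^ 2 := by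
    rw [← hA, ← hAc, ← integral_add hFS hFSc]
    have hid : (fun p => S.indicator F p + Sᶜ.indicator F p) = F := by
      funext p
      exact congrFun (Set.indicator_self_add_compl S F) p
    rw [hid, hFdef]
    rw [integral_prod_mul γ γ]
    ring
  have hIicIio : ∀ v : ℝ, ∫ u in Iic v, γ u ∂ρ
      = (∫ u in Iio v, γ u ∂ρ) + (ρ {v}).toReal * γ v := by
    intro v
    have hunion : Iio v ∪ {v} = Iic v := Iio_union_right
    rw [← hunion, setIntegral_union (by simp) (measurableSet_singleton v)
      hγi.integrableOn hγi.integrableOn, integral_singleton]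
    simp [smul_eq_mul, measureReal_def]
  have hdiff : 0 ≤ ∫ v, a v ∂ρ - ∫ u, b u ∂ρ := by
    rw [← integral_sub ha_int hb_int]
    apply integral_nonneg
    intro v
    simp only [hadef, hbdef, Pi.sub_apply, Pi.zero_apply]
    rw [hIicIio v]
    have hr : (∫ u in Iio v, γ u ∂ρ + (ρ {v}).toReal * γ v) * γ v
        - γ v * ∫ u in Iio v, γ u ∂ρ = (ρ {v}).toReal * (γ v * γ v) := by ring
    rw [hr]
    exact mul_nonneg ENNReal.toReal_nonneg (mul_self_nonneg _)
  have h2a : (∫ v, γ v ∂ρ) ^ 2 ≤ 2 * ∫ v, a v ∂ρ := by nlinarith [hsum, hdiff]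
  constructor
  · refine ha_int.congr (Eventually.of_forall fun v => ?_)
    simp [hadef, mul_comm]
  calc (∫ v, γ v ∂ρ) ^ 2 ≤ 2 * ∫ v, a v ∂ρ := h2a
  _ = 2 * ∫ v, γ v * (∫ u in Iic v, γ u ∂ρ) ∂ρ := by
      congr 1
      apply integral_congr_ae (Eventually.of_forall fun v => ?_)
      simp [hadef, mul_comm]

end Helpers

section Mollify

variable {d : ℕ}

/-- The normality condition extends from continuous test functions to rcll ones. -/
lemma pairing_nonneg_of_rcll {D : Set (Euc d)} (hconv : Convex ℝ D)
    {X φ : ℝ → Euc d} {M : BVMeasureData d φ}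
    (hnormal : ∀ η : ℝ → Euc d, Continuous η → (∀ s : ℝ, 0 ≤ s → η s ∈ closure D) →
      ∀ s t : ℝ, 0 ≤ s → s ≤ t → 0 ≤ M.pairing (fun τ => η τ - X τ) s t)
    (hXrc : RightContinuousOnNonneg X) (hXll : HasLeftLimitsOnPos X)
    {Y : ℝ → Euc d} (hYrc : RightContinuousOnNonneg Y) (hYll : HasLeftLimitsOnPos Y)
    (hYmem : ∀ s : ℝ, 0 ≤ s → Y s ∈ closure D)
    {t : ℝ} (ht : 0 ≤ t) :
    0 ≤ M.pairing (fun τ => Y τ - X τ) 0 t := by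
  set T : ℝ := t + 1 with hTdef
  have hT : 0 ≤ T := by linarith
  set I : Set ℝ := Ioc (0 : ℝ) t with hIdef
  have hImeas : MeasurableSet I := measurableSet_Ioc
  -- clamped versions
  set Yc : ℝ → Euc d := fun u => Y (clampTo T u) with hYcdef
  set Xc : ℝ → Euc d := fun u => X (clampTo t u) with hXcdef
  have hYcm : Measurable Yc := measurable_of_rc (rc_clamp hYrc hT)
  have hXcm : Measurable Xc := measurable_of_rc (rc_clamp hXrc ht)
  obtain ⟨BY, hBYIcc, hBY⟩ := exists_bound_of_rcll hYrc hYll hT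
  obtain ⟨BX, hBXIcc, hBX⟩ := exists_bound_of_rcll hXrc hXll ht
  have hBY0 : 0 ≤ BY := le_trans (norm_nonneg _) (hBY 0)
  have hYceq : ∀ u ∈ I, Yc u = Y u := fun u hu => by
    rw [hYcdef]; simp only
    rw [clampTo_of_mem ⟨hu.1.le, by rw [hTdef]; linarith [hu.2]⟩]
  have hXceq : ∀ u ∈ I, Xc u = X u := fun u hu => by
    rw [hXcdef]; simp only
    rw [clampTo_of_mem ⟨hu.1.le, hu.2⟩]
  have hYcmem : ∀ u : ℝ, Yc u ∈ closure D := fun u => hYmem _ (clampTo_mem hT u).1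
  have hYcb : ∀ u : ℝ, ‖Yc u‖ ≤ BY := hBY
  have hYcrc : ∀ s, ContinuousWithinAt Yc (Ici s) s := rc_clamp hYrc hT
  -- interval integrability of Yc
  have hYcii : ∀ a b : ℝ, IntervalIntegrable Yc volume a b := by
    intro a b
    constructor <;>
      exact integrableOn_of_bound volume measure_Ioc_lt_top hYcm.aestronglyMeasurable.restrict hYcb
  -- the primitive
  set K : ℝ → Euc d := fun b => ∫ u in (0:ℝ)..b, Yc u with hKdef
  have hK : Continuous K := intervalIntegral.continuous_primitive hYcii 0
  -- mollified sequence
  set η : ℕ → ℝ → Euc d := fun n s => ((n : ℝ) + 1) • (K (s + 1 / ((n : ℝ) + 1)) - K s)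
    with hηdef
  have hεpos : ∀ n : ℕ, (0 : ℝ) < 1 / ((n : ℝ) + 1) := fun n => by positivity
  have hηcont : ∀ n, Continuous (η n) := fun n => by
    show Continuous (fun s => ((n : ℝ) + 1) • (K (s + 1 / ((n : ℝ) + 1)) - K s)); fun_prop
  have hηeq : ∀ n s, η n s = ((n : ℝ) + 1) • ∫ u in Ioc s (s + 1 / ((n : ℝ) + 1)), Yc u := by
    intro n s
    rw [hηdef]
    simp only
    congr 1
    rw [hKdef]
    simp only
    rw [intervalIntegral.integral_interval_sub_left (hYcii 0 _) (hYcii 0 s),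
      intervalIntegral.integral_of_le (by linarith [hεpos n])]
  have hnormIoc : ∀ (n : ℕ) (s : ℝ), ‖∫ u in Ioc s (s + 1 / ((n : ℝ) + 1)), Yc u‖
      ≤ BY * (1 / ((n : ℝ) + 1)) := by
    intro n s
    have h := norm_setIntegral_le_of_norm_le_const (μ := volume)
      (s := Ioc s (s + 1 / ((n : ℝ) + 1))) (C := BY) measure_Ioc_lt_top
      (fun u _ => hYcb u)
    rwa [measureReal_def, Real.volume_Ioc, show s + 1 / ((n : ℝ) + 1) - s = 1 / ((n : ℝ) + 1) by ring,
      ENNReal.toReal_ofReal (hεpos n).le] at h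
  have hηb : ∀ n s, ‖η n s‖ ≤ BY := by
    intro n s
    rw [hηeq n s, norm_smul, Real.norm_eq_abs, abs_of_nonneg (by positivity)]
    calc ((n : ℝ) + 1) * ‖∫ u in Ioc s (s + 1 / ((n : ℝ) + 1)), Yc u‖
        ≤ ((n : ℝ) + 1) * (BY * (1 / ((n : ℝ) + 1))) := by
          apply mul_le_mul_of_nonneg_left (hnormIoc n s) (by positivity)
    _ = BY := by field_simp
  have hηmem : ∀ n s, η n s ∈ closure D := by
    intro n s
    have havg : η n s = ⨍ u in Ioc s (s + 1 / ((n : ℝ) + 1)), Yc u ∂volume := by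
      rw [setAverage_eq, hηeq n s, measureReal_def, Real.volume_Ioc,
        show s + 1 / ((n : ℝ) + 1) - s = 1 / ((n : ℝ) + 1) by ring,
        ENNReal.toReal_ofReal (hεpos n).le, one_div, inv_inv]
    rw [havg]
    apply (hconv.closure).set_average_mem isClosed_closure
    · rw [Real.volume_Ioc]
      simp only [ne_eq, ENNReal.ofReal_eq_zero, not_le]
      linarith [hεpos n]
    · exact (measure_Ioc_lt_top).ne
    · exact Eventually.of_forall fun u => hYcmem u
    · exact integrableOn_of_bound volume measure_Ioc_lt_top
        hYcm.aestronglyMeasurable.restrict hYcb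
  -- pointwise convergence at nonneg points
  have hηtend : ∀ s : ℝ, 0 ≤ s → Tendsto (fun n => η n s) atTop (𝓝 (Yc s)) := by
    intro s hs
    rw [Metric.tendsto_atTop]
    intro ε hε
    obtain ⟨δ, hδ, hδ'⟩ := Metric.continuousWithinAt_iff.1 (hYcrc s) (ε / 2) (by linarith)
    obtain ⟨N, hN⟩ := exists_nat_gt (1 / δ)
    refine ⟨N, fun n hn => ?_⟩
    have hεn : 1 / ((n : ℝ) + 1) < δ := by
      rw [div_lt_iff₀ (by positivity)]
      rw [div_lt_iff₀ hδ] at hN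
      have hNn : (N : ℝ) ≤ (n : ℝ) := Nat.cast_le.2 hn
      nlinarith [mul_le_mul_of_nonneg_right (show (N : ℝ) ≤ (n : ℝ) + 1 by linarith) hδ.le]
    set εn : ℝ := 1 / ((n : ℝ) + 1) with hεndef
    have hconst : ∫ _ in Ioc s (s + εn), Yc s = εn • Yc s := by
      rw [setIntegral_const, measureReal_def, Real.volume_Ioc,
        show s + εn - s = εn by ring, ENNReal.toReal_ofReal (hεpos n).le]
    have hsub : η n s - Yc s = ((n : ℝ) + 1) • ∫ u in Ioc s (s + εn), (Yc u - Yc s) := by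
      rw [integral_sub (integrableOn_of_bound volume measure_Ioc_lt_top
          hYcm.aestronglyMeasurable.restrict hYcb) (integrableOn_const measure_Ioc_lt_top.ne),
        hconst, smul_sub, hηeq n s, smul_smul,
        show ((n : ℝ) + 1) * εn = 1 by rw [hεndef]; field_simp]
      rw [one_smul]
    have hbound : ‖∫ u in Ioc s (s + εn), (Yc u - Yc s)‖ ≤ (ε / 2) * εn := by
      apply le_trans (norm_setIntegral_le_of_norm_le_const measure_Ioc_lt_top
        (C := ε / 2) fun u hu => ?_)
      · rw [measureReal_def, Real.volume_Ioc, show s + εn - s = εn by ring, ENNReal.toReal_ofReal (hεpos n).le]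
      · have hdist : dist u s < δ := by
          rw [Real.dist_eq, abs_of_nonneg (by linarith [hu.1])]
          linarith [hu.2, hεn]
        have := hδ' (mem_Ici.2 hu.1.le) hdist
        rw [dist_eq_norm] at this
        exact this.le
    rw [dist_eq_norm, hsub, norm_smul, Real.norm_eq_abs, abs_of_nonneg (by positivity)]
    calc ((n : ℝ) + 1) * ‖∫ u in Ioc s (s + εn), (Yc u - Yc s)‖
        ≤ ((n : ℝ) + 1) * ((ε / 2) * εn) := by
          apply mul_le_mul_of_nonneg_left hbound (by positivity)
    _ = ε / 2 := by rw [hεndef]; field_simp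
    _ < ε := by linarith
  -- convergence of each integral
  have key : ∀ (i : Fin d) (μ : Measure ℝ), μ (Icc 0 t) < ⊤ →
      Tendsto (fun n => ∫ τ in I, (η n τ i - X τ i) ∂μ) atTop
        (𝓝 (∫ τ in I, (Y τ i - X τ i) ∂μ)) := by
    intro i μ hμ
    have hμI : μ I < ⊤ := lt_of_le_of_lt (measure_mono Ioc_subset_Icc_self) hμ
    haveI : IsFiniteMeasure (μ.restrict I) :=
      ⟨by rwa [Measure.restrict_apply_univ]⟩
    have hXint : Integrable (fun τ => X τ i) (μ.restrict I) := by
      have hXc : Integrable (fun τ => Xc τ i) (μ.restrict I) := by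
        refine integrableOn_of_bound μ hμI ?_ (B := BX) ?_
        · exact (((EuclideanSpace.proj i : Euc d →L[ℝ] ℝ).continuous.measurable).comp
            hXcm).aestronglyMeasurable.restrict
        · intro u
          rw [Real.norm_eq_abs]
          exact (coord_le_norm (Xc u) i).trans (hBX u)
      refine hXc.congr ?_
      filter_upwards [ae_restrict_mem hImeas] with u hu
      rw [hXceq u hu]
    have hYint : Integrable (fun τ => Yc τ i) (μ.restrict I) := by
      refine integrableOn_of_bound μ hμI ?_ (B := BY) ?_
      · exact (((EuclideanSpace.proj i : Euc d →L[ℝ] ℝ).continuous.measurable).comp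
          hYcm).aestronglyMeasurable.restrict
      · intro u
        rw [Real.norm_eq_abs]
        exact (coord_le_norm (Yc u) i).trans (hYcb u)
    have hηint : ∀ n, Integrable (fun τ => η n τ i) (μ.restrict I) := by
      intro n
      refine integrableOn_of_bound μ hμI ?_ (B := BY) ?_
      · exact (((EuclideanSpace.proj i : Euc d →L[ℝ] ℝ).continuous.comp
          (hηcont n)).measurable).aestronglyMeasurable.restrict
      · intro u
        rw [Real.norm_eq_abs]
        exact (coord_le_norm (η n u) i).trans (hηb n u)
    have htendi : Tendsto (fun n => ∫ τ in I, η n τ i ∂μ) atTop (𝓝 (∫ τ in I, Yc τ i ∂μ)) := by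
      apply tendsto_integral_of_dominated_convergence (fun _ => BY)
        (fun n => (hηint n).1) (integrable_const BY)
      · intro n
        filter_upwards with u
        rw [Real.norm_eq_abs]
        exact (coord_le_norm (η n u) i).trans (hηb n u)
      · filter_upwards [ae_restrict_mem hImeas] with u hu
        exact ((EuclideanSpace.proj i : Euc d →L[ℝ] ℝ).continuous.tendsto (Yc u)).comp
          (hηtend u hu.1.le)
    have heqY : ∫ τ in I, (Y τ i - X τ i) ∂μ = (∫ τ in I, Yc τ i ∂μ) - ∫ τ in I, X τ i ∂μ := by
      rw [← integral_sub hYint hXint]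
      apply integral_congr_ae
      filter_upwards [ae_restrict_mem hImeas] with u hu
      rw [hYceq u hu]
    rw [heqY]
    have hsplit : ∀ n, ∫ τ in I, (η n τ i - X τ i) ∂μ
        = (∫ τ in I, η n τ i ∂μ) - ∫ τ in I, X τ i ∂μ := fun n =>
      integral_sub (hηint n) hXint
    simp only [hsplit]
    exact htendi.sub tendsto_const_nhds
  -- conclude
  have hpos : ∀ n, 0 ≤ M.pairing (fun τ => η n τ - X τ) 0 t :=
    fun n => hnormal (η n) (hηcont n) (fun s _ => hηmem n s) 0 t le_rfl ht
  have htendpair : Tendsto (fun n => M.pairing (fun τ => η n τ - X τ) 0 t) atTop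
      (𝓝 (M.pairing (fun τ => Y τ - X τ) 0 t)) := by
    simp only [BVMeasureData.pairing, PiLp.sub_apply]
    apply tendsto_finset_sum
    intro i _
    exact (key i (M.pos i) (M.pos_fin i t)).sub (key i (M.neg i) (M.neg_fin i t))
  exact ge_of_tendsto' htendpair hpos

end Mollify

section Component

/-- One-component estimate for the main theorem. -/
lemma component_estimate (t : ℝ) (ht : 0 ≤ t) (μp μm μp' μm' : Measure ℝ)
    (hp : μp (Icc 0 t) < ⊤) (hm : μm (Icc 0 t) < ⊤) (hp' : μp' (Icc 0 t) < ⊤)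
    (hm' : μm' (Icc 0 t) < ⊤)
    (α : ℝ) {F G : ℝ → ℝ} (hFm : Measurable F) (hGm : Measurable G)
    (BF BG : ℝ) (hFb : ∀ v, |F v| ≤ BF) (hGb : ∀ v, |G v| ≤ BG)
    (hFG : ∀ v ∈ Ioc (0:ℝ) t, F v + G v = α +
      ((((μp (Ioc 0 v)).toReal - (μm (Ioc 0 v)).toReal)
        - ((μp' (Ioc 0 v)).toReal - (μm' (Ioc 0 v)).toReal)))) :
    (α + (((μp (Ioc 0 t)).toReal - (μm (Ioc 0 t)).toReal)
        - ((μp' (Ioc 0 t)).toReal - (μm' (Ioc 0 t)).toReal))) ^ 2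
      ≤ α ^ 2 + 2 * (((((∫ v in Ioc 0 t, F v ∂μp) - ∫ v in Ioc 0 t, F v ∂μm)
            - ((∫ v in Ioc 0 t, F v ∂μp') - ∫ v in Ioc 0 t, F v ∂μm'))
          + ((((∫ v in Ioc 0 t, G v ∂μp) - ∫ v in Ioc 0 t, G v ∂μm)
            - ((∫ v in Ioc 0 t, G v ∂μp') - ∫ v in Ioc 0 t, G v ∂μm'))))) := by
  set I : Set ℝ := Ioc (0:ℝ) t with hIdef
  have hImeas : MeasurableSet I := measurableSet_Ioc
  set a : Measure ℝ := μp.restrict I with hadef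
  set b : Measure ℝ := μm.restrict I with hbdef
  set a' : Measure ℝ := μp'.restrict I with ha'def
  set b' : Measure ℝ := μm'.restrict I with hb'def
  have hIle : ∀ (μ : Measure ℝ), μ (Icc 0 t) < ⊤ → μ I < ⊤ := fun μ h =>
    lt_of_le_of_lt (measure_mono Ioc_subset_Icc_self) h
  haveI hfa : IsFiniteMeasure a := ⟨by rw [hadef, Measure.restrict_apply_univ]; exact hIle _ hp⟩
  haveI hfb : IsFiniteMeasure b := ⟨by rw [hbdef, Measure.restrict_apply_univ]; exact hIle _ hm⟩
  haveI hfa' : IsFiniteMeasure a' :=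
    ⟨by rw [ha'def, Measure.restrict_apply_univ]; exact hIle _ hp'⟩
  haveI hfb' : IsFiniteMeasure b' :=
    ⟨by rw [hb'def, Measure.restrict_apply_univ]; exact hIle _ hm'⟩
  set ρ : Measure ℝ := a + b + a' + b' with hρdef
  haveI : IsFiniteMeasure ρ := by
    constructor
    rw [hρdef]
    simp only [Measure.add_apply]
    exact ENNReal.add_lt_top.2 ⟨ENNReal.add_lt_top.2 ⟨ENNReal.add_lt_top.2
      ⟨measure_lt_top a _, measure_lt_top b _⟩, measure_lt_top a' _⟩, measure_lt_top b' _⟩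
  have hle_a : a ≤ ρ := by
    rw [hρdef]
    refine Measure.le_iff.2 fun s hs => ?_
    simp only [Measure.add_apply]
    exact le_add_right (le_add_right (le_add_right le_rfl))
  have hle_b : b ≤ ρ := by
    rw [hρdef]
    refine Measure.le_iff.2 fun s hs => ?_
    simp only [Measure.add_apply]
    exact le_add_right (le_add_right (le_add_left le_rfl))
  have hle_a' : a' ≤ ρ := by
    rw [hρdef]
    refine Measure.le_iff.2 fun s hs => ?_
    simp only [Measure.add_apply]
    exact le_add_right (le_add_left le_rfl)
  have hle_b' : b' ≤ ρ := by
    rw [hρdef]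
    refine Measure.le_iff.2 fun s hs => ?_
    simp only [Measure.add_apply]
    exact le_add_left le_rfl
  have hac_a : a ≪ ρ := Measure.absolutelyContinuous_of_le hle_a
  have hac_b : b ≪ ρ := Measure.absolutelyContinuous_of_le hle_b
  have hac_a' : a' ≪ ρ := Measure.absolutelyContinuous_of_le hle_a'
  have hac_b' : b' ≪ ρ := Measure.absolutelyContinuous_of_le hle_b'
  set γ : ℝ → ℝ := fun v => (a.rnDeriv ρ v).toReal - (b.rnDeriv ρ v).toReal
    - (a'.rnDeriv ρ v).toReal + (b'.rnDeriv ρ v).toReal with hγdef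
  have hγint : Integrable γ ρ :=
    ((Measure.integrable_toReal_rnDeriv.sub Measure.integrable_toReal_rnDeriv).sub
      Measure.integrable_toReal_rnDeriv).add Measure.integrable_toReal_rnDeriv
  -- value of the CDF of γ
  have hcdf : ∀ v : ℝ, ∫ u in Iic v, γ u ∂ρ
      = ((a (Iic v)).toReal - (b (Iic v)).toReal)
        - ((a' (Iic v)).toReal - (b' (Iic v)).toReal) := by
    intro v
    have i1 := Measure.integrable_toReal_rnDeriv (μ := a) (ν := ρ)
    have i2 := Measure.integrable_toReal_rnDeriv (μ := b) (ν := ρ)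
    have i3 := Measure.integrable_toReal_rnDeriv (μ := a') (ν := ρ)
    have i4 := Measure.integrable_toReal_rnDeriv (μ := b') (ν := ρ)
    have j12 : Integrable (fun u : ℝ => (a.rnDeriv ρ u).toReal - (b.rnDeriv ρ u).toReal)
        (ρ.restrict (Iic v)) := (i1.sub i2).restrict
    have j123 : Integrable (fun u : ℝ => (a.rnDeriv ρ u).toReal - (b.rnDeriv ρ u).toReal
        - (a'.rnDeriv ρ u).toReal) (ρ.restrict (Iic v)) := ((i1.sub i2).sub i3).restrict
    rw [hγdef]
    simp only
    rw [integral_add j123 (i4.restrict), integral_sub j12 (i3.restrict),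
      integral_sub (i1.restrict) (i2.restrict),
      Measure.setIntegral_toReal_rnDeriv hac_a, Measure.setIntegral_toReal_rnDeriv hac_b,
      Measure.setIntegral_toReal_rnDeriv hac_a', Measure.setIntegral_toReal_rnDeriv hac_b']
    simp only [measureReal_def]
    ring
  -- total mass
  have htot : ∫ v, γ v ∂ρ
      = (((μp (Ioc 0 t)).toReal - (μm (Ioc 0 t)).toReal)
        - ((μp' (Ioc 0 t)).toReal - (μm' (Ioc 0 t)).toReal)) := by
    have i1 := Measure.integrable_toReal_rnDeriv (μ := a) (ν := ρ)
    have i2 := Measure.integrable_toReal_rnDeriv (μ := b) (ν := ρ)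
    have i3 := Measure.integrable_toReal_rnDeriv (μ := a') (ν := ρ)
    have i4 := Measure.integrable_toReal_rnDeriv (μ := b') (ν := ρ)
    have j12 : Integrable (fun u : ℝ => (a.rnDeriv ρ u).toReal - (b.rnDeriv ρ u).toReal) ρ :=
      i1.sub i2
    have j123 : Integrable (fun u : ℝ => (a.rnDeriv ρ u).toReal - (b.rnDeriv ρ u).toReal
        - (a'.rnDeriv ρ u).toReal) ρ := (i1.sub i2).sub i3
    rw [hγdef]
    simp only
    rw [integral_add j123 i4, integral_sub j12 i3, integral_sub i1 i2,
      Measure.integral_toReal_rnDeriv hac_a, Measure.integral_toReal_rnDeriv hac_b,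
      Measure.integral_toReal_rnDeriv hac_a', Measure.integral_toReal_rnDeriv hac_b',
      hadef, hbdef, ha'def, hb'def]
    simp only [measureReal_def, Measure.restrict_apply_univ]
    ring
  -- a.e. membership in I
  have hρI : ∀ᵐ v ∂ρ, v ∈ I := by
    rw [ae_iff]
    have hIc : {v : ℝ | ¬ v ∈ I} = Iᶜ := rfl
    rw [hIc, hρdef]
    simp only [Measure.add_apply, hadef, hbdef, ha'def, hb'def,
      Measure.restrict_apply hImeas.compl, compl_inter_self, measure_empty, add_zero]
  -- CDF over I
  have hIic_gen : ∀ (μ : Measure ℝ) (v : ℝ), v ∈ I → (μ.restrict I) (Iic v) = μ (Ioc 0 v) := by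
    intro μ v hv
    rw [Measure.restrict_apply measurableSet_Iic]
    congr 1
    ext u
    simp only [mem_inter_iff, mem_Iic, hIdef, mem_Ioc]
    constructor
    · rintro ⟨h1, h2, _⟩; exact ⟨h2, h1⟩
    · rintro ⟨h1, h2⟩; exact ⟨h2, h1, h2.trans hv.2⟩
  have hcdf' : ∀ v ∈ I, ∫ u in Iic v, γ u ∂ρ
      = (((μp (Ioc 0 v)).toReal - (μm (Ioc 0 v)).toReal)
        - ((μp' (Ioc 0 v)).toReal - (μm' (Ioc 0 v)).toReal)) := by
    intro v hv
    rw [hcdf v, hadef, hbdef, ha'def, hb'def, hIic_gen μp v hv, hIic_gen μm v hv,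
      hIic_gen μp' v hv, hIic_gen μm' v hv]
  -- expansion of pairing-type integrals
  have hSI : ∀ (H : ℝ → ℝ), Measurable H → ∀ BH : ℝ, (∀ v, |H v| ≤ BH) →
      ∫ v, H v * γ v ∂ρ = (((∫ v in I, H v ∂μp) - ∫ v in I, H v ∂μm)
        - ((∫ v in I, H v ∂μp') - ∫ v in I, H v ∂μm')) := by
    intro H hHm BH hHb
    have hbd : ∀ᵐ v ∂ρ, ‖H v‖ ≤ BH :=
      Eventually.of_forall fun v => by rw [Real.norm_eq_abs]; exact hHb v
    have i1 := Measure.integrable_toReal_rnDeriv (μ := a) (ν := ρ)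
    have i2 := Measure.integrable_toReal_rnDeriv (μ := b) (ν := ρ)
    have i3 := Measure.integrable_toReal_rnDeriv (μ := a') (ν := ρ)
    have i4 := Measure.integrable_toReal_rnDeriv (μ := b') (ν := ρ)
    have k1 : Integrable (fun v => H v * (a.rnDeriv ρ v).toReal) ρ :=
      i1.bdd_mul hHm.aestronglyMeasurable hbd
    have k2 : Integrable (fun v => H v * (b.rnDeriv ρ v).toReal) ρ :=
      i2.bdd_mul hHm.aestronglyMeasurable hbd
    have k3 : Integrable (fun v => H v * (a'.rnDeriv ρ v).toReal) ρ :=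
      i3.bdd_mul hHm.aestronglyMeasurable hbd
    have k4 : Integrable (fun v => H v * (b'.rnDeriv ρ v).toReal) ρ :=
      i4.bdd_mul hHm.aestronglyMeasurable hbd
    have k12 : Integrable (fun v : ℝ => H v * (a.rnDeriv ρ v).toReal
        - H v * (b.rnDeriv ρ v).toReal) ρ := k1.sub k2
    have k123 : Integrable (fun v : ℝ => H v * (a.rnDeriv ρ v).toReal
        - H v * (b.rnDeriv ρ v).toReal - H v * (a'.rnDeriv ρ v).toReal) ρ := (k1.sub k2).sub k3
    have hexp : (fun v => H v * γ v) = fun v => H v * (a.rnDeriv ρ v).toReal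
        - H v * (b.rnDeriv ρ v).toReal - H v * (a'.rnDeriv ρ v).toReal
        + H v * (b'.rnDeriv ρ v).toReal := by
      funext v
      rw [hγdef]
      simp only
      ring
    have conv : ∀ (ν : Measure ℝ) (hν : ν.restrict I ≪ ρ)
        (hh : (ν.restrict I).HaveLebesgueDecomposition ρ)
        (hfin : IsFiniteMeasure (ν.restrict I)),
        ∫ v, H v * ((ν.restrict I).rnDeriv ρ v).toReal ∂ρ = ∫ v in I, H v ∂ν := by
      intro ν hν hh hfin
      calc ∫ v, H v * ((ν.restrict I).rnDeriv ρ v).toReal ∂ρ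
          = ∫ v, ((ν.restrict I).rnDeriv ρ v).toReal • H v ∂ρ := by
            apply integral_congr_ae (Eventually.of_forall fun v => ?_)
            simp only [smul_eq_mul]
            ring
      _ = ∫ v, H v ∂(ν.restrict I) := MeasureTheory.integral_rnDeriv_smul hν
      _ = ∫ v in I, H v ∂ν := rfl
    rw [hexp, integral_add k123 k4, integral_sub k12 k3, integral_sub k1 k2,
      hadef, hbdef, ha'def, hb'def]
    rw [conv μp (by rw [← hadef]; exact hac_a) (by rw [← hadef]; exact Measure.haveLebesgueDecomposition_of_finiteMeasure) (by rw [← hadef]; exact hfa),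
      conv μm (by rw [← hbdef]; exact hac_b) (by rw [← hbdef]; exact Measure.haveLebesgueDecomposition_of_finiteMeasure) (by rw [← hbdef]; exact hfb),
      conv μp' (by rw [← ha'def]; exact hac_a') (by rw [← ha'def]; exact Measure.haveLebesgueDecomposition_of_finiteMeasure) (by rw [← ha'def]; exact hfa'),
      conv μm' (by rw [← hb'def]; exact hac_b') (by rw [← hb'def]; exact Measure.haveLebesgueDecomposition_of_finiteMeasure) (by rw [← hb'def]; exact hfb')]
    ring
  -- core inequality
  obtain ⟨hcore_int, hquad⟩ := core_quad ρ hγint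
  have hFγ := hSI F hFm BF hFb
  have hGγ := hSI G hGm BG hGb
  have hFint : Integrable (fun v => F v * γ v) ρ :=
    hγint.bdd_mul hFm.aestronglyMeasurable
      (Eventually.of_forall fun v => by rw [Real.norm_eq_abs]; exact hFb v)
  have hGint : Integrable (fun v => G v * γ v) ρ :=
    hγint.bdd_mul hGm.aestronglyMeasurable
      (Eventually.of_forall fun v => by rw [Real.norm_eq_abs]; exact hGb v)
  have hmix : α * (∫ v, γ v ∂ρ) + ∫ v, γ v * (∫ u in Iic v, γ u ∂ρ) ∂ρ
      = (∫ v, F v * γ v ∂ρ) + ∫ v, G v * γ v ∂ρ := by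
    rw [← integral_add hFint hGint, ← integral_const_mul α γ,
      ← integral_add (hγint.const_mul α) hcore_int]
    apply integral_congr_ae
    filter_upwards [hρI] with v hv
    rw [hcdf' v hv]
    have h2 := hFG v hv
    linear_combination (-(γ v)) * h2
  rw [← htot]
  nlinarith [hquad, hmix, hFγ, hGγ]

end Component

section CDF

lemma cdfR_props (μ : Measure ℝ) (t : ℝ) (hμ : μ (Icc 0 t) < ⊤) :
    Measurable (fun v : ℝ => (μ (Ioc 0 (min v t))).toReal) ∧
    (∀ v : ℝ, |(μ (Ioc 0 (min v t))).toReal| ≤ (μ (Icc 0 t)).toReal) ∧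
    (∀ v ∈ Ioc (0:ℝ) t, (μ (Ioc 0 (min v t))).toReal = (μ (Ioc 0 v)).toReal) := by
  have hsub : ∀ v : ℝ, Ioc (0:ℝ) (min v t) ⊆ Icc 0 t := fun v u hu =>
    ⟨hu.1.le, hu.2.trans (min_le_right _ _)⟩
  have hb : ∀ v : ℝ, μ (Ioc 0 (min v t)) ≤ μ (Icc 0 t) := fun v => measure_mono (hsub v)
  refine ⟨?_, ?_, ?_⟩
  · apply Monotone.measurable
    intro u v huv
    exact ENNReal.toReal_mono (lt_of_le_of_lt (hb v) hμ).ne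
      (measure_mono (Ioc_subset_Ioc le_rfl (min_le_min huv le_rfl)))
  · intro v
    rw [abs_of_nonneg ENNReal.toReal_nonneg]
    exact ENNReal.toReal_mono hμ.ne (hb v)
  · intro v hv
    rw [min_eq_left hv.2]

end CDF

/-- **Lemma 4.1.2(i).** If `(X, φ)` and `(X̃, φ̃)` solve the Skorohod equations `X = w + φ`
and `X̃ = w̃ + φ̃` for a nonempty convex open `D ⊆ ℝ^d`, then for all `t ≥ 0`,
`|X(t) − X̃(t)|² ≤ |w(t) − w̃(t)|² + 2∫_{(0,t]} ⟨w(t) − w̃(t) − w(s) + w̃(s), dφ(s) − dφ̃(s)⟩`. -/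
theorem skorohod_difference_estimate {d : ℕ} (D : Set (Euc d)) (hne : D.Nonempty)
    (hconv : Convex ℝ D) (hopen : IsOpen D)
    (w w' X X' φ φ' : ℝ → Euc d)
    (hw_rc : RightContinuousOnNonneg w) (hw_ll : HasLeftLimitsOnPos w)
    (hw'_rc : RightContinuousOnNonneg w') (hw'_ll : HasLeftLimitsOnPos w')
    (hw0 : w 0 ∈ closure D) (hw'0 : w' 0 ∈ closure D)
    (M : BVMeasureData d φ) (M' : BVMeasureData d φ')
    (hsol : IsSkorohodSolution D w X φ M) (hsol' : IsSkorohodSolution D w' X' φ' M') :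
    ∀ t : ℝ, 0 ≤ t →
      ‖X t - X' t‖ ^ 2 ≤ ‖w t - w' t‖ ^ 2 +
        2 * (M.pairing (fun s => w t - w' t - w s + w' s) 0 t -
             M'.pairing (fun s => w t - w' t - w s + w' s) 0 t) := by
  intro t ht
  have hnormsq : ∀ z : Euc d, ‖z‖ ^ 2 = ∑ i, (z i) ^ 2 := by
    intro z
    rw [EuclideanSpace.norm_eq, Real.sq_sqrt (by positivity)]
    exact Finset.sum_congr rfl fun i _ => by rw [Real.norm_eq_abs, sq_abs]
  obtain ⟨BX, hBXIcc, hBX⟩ := exists_bound_of_rcll hsol.rightCont hsol.leftLim ht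
  obtain ⟨BX', hBX'Icc, hBX'⟩ := exists_bound_of_rcll hsol'.rightCont hsol'.leftLim ht
  set Xc : ℝ → Euc d := fun u => X (clampTo t u) with hXcdef
  set X'c : ℝ → Euc d := fun u => X' (clampTo t u) with hX'cdef
  have hXcm : Measurable Xc := measurable_of_rc (rc_clamp hsol.rightCont ht)
  have hX'cm : Measurable X'c := measurable_of_rc (rc_clamp hsol'.rightCont ht)
  have hXceq : ∀ u ∈ Ioc (0:ℝ) t, Xc u = X u := fun u hu => by
    rw [hXcdef]; simp only; rw [clampTo_of_mem ⟨hu.1.le, hu.2⟩]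
  have hX'ceq : ∀ u ∈ Ioc (0:ℝ) t, X'c u = X' u := fun u hu => by
    rw [hX'cdef]; simp only; rw [clampTo_of_mem ⟨hu.1.le, hu.2⟩]
  have hφcomp : ∀ (i : Fin d) (v : ℝ), 0 ≤ v →
      φ v i = ((M.pos i) (Ioc 0 v)).toReal - ((M.neg i) (Ioc 0 v)).toReal := by
    intro i v hv
    have h := M.increments i 0 v le_rfl hv
    have h0 : φ 0 i = 0 := by rw [hsol.assoc.init]; rfl
    rw [h0] at h
    linarith
  have hφ'comp : ∀ (i : Fin d) (v : ℝ), 0 ≤ v →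
      φ' v i = ((M'.pos i) (Ioc 0 v)).toReal - ((M'.neg i) (Ioc 0 v)).toReal := by
    intro i v hv
    have h := M'.increments i 0 v le_rfl hv
    have h0 : φ' 0 i = 0 := by rw [hsol'.assoc.init]; rfl
    rw [h0] at h
    linarith
  -- per-component estimate
  have hcomp : ∀ i : Fin d,
      (X t i - X' t i) ^ 2 ≤ (w t i - w' t i) ^ 2
        + 2 * (((((∫ τ in Ioc 0 t, (w t - w' t - w τ + w' τ) i ∂(M.pos i))
                 - ∫ τ in Ioc 0 t, (w t - w' t - w τ + w' τ) i ∂(M.neg i))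
               - ((∫ τ in Ioc 0 t, (w t - w' t - w τ + w' τ) i ∂(M'.pos i))
                 - ∫ τ in Ioc 0 t, (w t - w' t - w τ + w' τ) i ∂(M'.neg i))))
            + ((((∫ τ in Ioc 0 t, (X τ - X' τ) i ∂(M.pos i))
                 - ∫ τ in Ioc 0 t, (X τ - X' τ) i ∂(M.neg i))
               - ((∫ τ in Ioc 0 t, (X τ - X' τ) i ∂(M'.pos i))
                 - ∫ τ in Ioc 0 t, (X τ - X' τ) i ∂(M'.neg i))))) := by
    intro i
    obtain ⟨hcpm, hcpb, hcpe⟩ := cdfR_props (M.pos i) t (M.pos_fin i t)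
    obtain ⟨hcmm, hcmb, hcme⟩ := cdfR_props (M.neg i) t (M.neg_fin i t)
    obtain ⟨hcp'm, hcp'b, hcp'e⟩ := cdfR_props (M'.pos i) t (M'.pos_fin i t)
    obtain ⟨hcm'm, hcm'b, hcm'e⟩ := cdfR_props (M'.neg i) t (M'.neg_fin i t)
    set cp : ℝ → ℝ := fun v => ((M.pos i) (Ioc 0 (min v t))).toReal with hcp
    set cm : ℝ → ℝ := fun v => ((M.neg i) (Ioc 0 (min v t))).toReal with hcm
    set cp' : ℝ → ℝ := fun v => ((M'.pos i) (Ioc 0 (min v t))).toReal with hcp'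
    set cm' : ℝ → ℝ := fun v => ((M'.neg i) (Ioc 0 (min v t))).toReal with hcm'
    set α : ℝ := w t i - w' t i with hα
    set F : ℝ → ℝ := fun v => α - Xc v i + (cp v - cm v) + X'c v i - (cp' v - cm' v) with hF
    set G : ℝ → ℝ := fun v => Xc v i - X'c v i with hG
    have hproj : Measurable (fun z : Euc d => z i) :=
      (EuclideanSpace.proj i : Euc d →L[ℝ] ℝ).continuous.measurable
    have hFm : Measurable F := by
      apply Measurable.sub
      apply Measurable.add
      apply Measurable.add
      apply Measurable.sub
      · exact measurable_const
      · exact hproj.comp hXcm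
      · exact hcpm.sub hcmm
      · exact hproj.comp hX'cm
      · exact hcp'm.sub hcm'm
    have hGm : Measurable G := (hproj.comp hXcm).sub (hproj.comp hX'cm)
    set BF : ℝ := |α| + (BX + BX') + (((M.pos i) (Icc 0 t)).toReal
      + ((M.neg i) (Icc 0 t)).toReal + ((M'.pos i) (Icc 0 t)).toReal
      + ((M'.neg i) (Icc 0 t)).toReal) with hBF
    have hXb : ∀ v : ℝ, |Xc v i| ≤ BX := fun v => (coord_le_norm (Xc v) i).trans (hBX v)
    have hX'b : ∀ v : ℝ, |X'c v i| ≤ BX' := fun v => (coord_le_norm (X'c v) i).trans (hBX' v)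
    have hFb : ∀ v : ℝ, |F v| ≤ BF := by
      intro v
      have b1 := abs_le.1 (hXb v)
      have b2 := abs_le.1 (hX'b v)
      have b3 := abs_le.1 (hcpb v)
      have b4 := abs_le.1 (hcmb v)
      have b5 := abs_le.1 (hcp'b v)
      have b6 := abs_le.1 (hcm'b v)
      have b0l := neg_abs_le α
      have b0r := le_abs_self α
      rw [hBF, abs_le]
      constructor
      · rw [hF]; simp only [hcp, hcm, hcp', hcm']; linarith
      · rw [hF]; simp only [hcp, hcm, hcp', hcm']; linarith
    have hGb : ∀ v : ℝ, |G v| ≤ BX + BX' := by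
      intro v
      have b1 := abs_le.1 (hXb v)
      have b2 := abs_le.1 (hX'b v)
      rw [abs_le]
      constructor
      · rw [hG]; simp only; linarith
      · rw [hG]; simp only; linarith
    have hFG : ∀ v ∈ Ioc (0:ℝ) t, F v + G v = α +
        (((((M.pos i) (Ioc 0 v)).toReal - ((M.neg i) (Ioc 0 v)).toReal)
          - ((((M'.pos i) (Ioc 0 v)).toReal - ((M'.neg i) (Ioc 0 v)).toReal)))) := by
      intro v hv
      rw [hF, hG]
      simp only
      rw [hcp, hcm, hcp', hcm']
      simp only
      rw [hcpe v hv, hcme v hv, hcp'e v hv, hcm'e v hv]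
      ring
    have key := component_estimate t ht (M.pos i) (M.neg i) (M'.pos i) (M'.neg i)
      (M.pos_fin i t) (M.neg_fin i t) (M'.pos_fin i t) (M'.neg_fin i t)
      α hFm hGm BF (BX + BX') hFb hGb hFG
    -- identify the left side
    have hXt : X t i - X' t i = α + ((((M.pos i) (Ioc 0 t)).toReal
        - ((M.neg i) (Ioc 0 t)).toReal)
        - ((((M'.pos i) (Ioc 0 t)).toReal - ((M'.neg i) (Ioc 0 t)).toReal))) := by
      have e1 : X t i = w t i + φ t i := by
        have h := congrArg (fun z : Euc d => z i) (hsol.eqn t ht)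
        simpa using h
      have e2 : X' t i = w' t i + φ' t i := by
        have h := congrArg (fun z : Euc d => z i) (hsol'.eqn t ht)
        simpa using h
      rw [e1, e2, hφcomp i t ht, hφ'comp i t ht, hα]
      ring
    -- identify the integrals
    have hFrw : ∀ (μ : Measure ℝ), ∫ v in Ioc 0 t, F v ∂μ
        = ∫ τ in Ioc 0 t, (w t - w' t - w τ + w' τ) i ∂μ := by
      intro μ
      apply setIntegral_congr_fun measurableSet_Ioc
      intro v hv
      have e1 : X v i = w v i + φ v i := by
        have h := congrArg (fun z : Euc d => z i) (hsol.eqn v hv.1.le)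
        simpa using h
      have e2 : X' v i = w' v i + φ' v i := by
        have h := congrArg (fun z : Euc d => z i) (hsol'.eqn v hv.1.le)
        simpa using h
      have e3 : Xc v i = X v i := congrArg (fun z : Euc d => z i) (hXceq v hv)
      have e4 : X'c v i = X' v i := congrArg (fun z : Euc d => z i) (hX'ceq v hv)
      have e5 : cp v - cm v = φ v i := by
        rw [hcp, hcm]
        simp only
        rw [hcpe v hv, hcme v hv, hφcomp i v hv.1.le]
      have e6 : cp' v - cm' v = φ' v i := by
        rw [hcp', hcm']
        simp only
        rw [hcp'e v hv, hcm'e v hv, hφ'comp i v hv.1.le]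
      have e7 : (w t - w' t - w v + w' v) i = w t i - w' t i - w v i + w' v i := by
        simp [PiLp.sub_apply, PiLp.add_apply]
      rw [hF]
      simp only
      rw [e7, hα]
      have e8 : Xc v i = w v i + φ v i := by rw [e3, e1]
      have e9 : X'c v i = w' v i + φ' v i := by rw [e4, e2]
      rw [e8, e9]
      linarith [e5, e6]
    have hGrw : ∀ (μ : Measure ℝ), ∫ v in Ioc 0 t, G v ∂μ
        = ∫ τ in Ioc 0 t, (X τ - X' τ) i ∂μ := by
      intro μ
      apply setIntegral_congr_fun measurableSet_Ioc
      intro v hv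
      have e3 : Xc v i = X v i := congrArg (fun z : Euc d => z i) (hXceq v hv)
      have e4 : X'c v i = X' v i := congrArg (fun z : Euc d => z i) (hX'ceq v hv)
      have e7 : (X v - X' v) i = X v i - X' v i := by simp [PiLp.sub_apply]
      rw [hG]
      simp only
      rw [e3, e4, e7]
    rw [hXt]
    rw [hFrw (M.pos i), hFrw (M.neg i), hFrw (M'.pos i), hFrw (M'.neg i),
      hGrw (M.pos i), hGrw (M.neg i), hGrw (M'.pos i), hGrw (M'.neg i)] at key
    rw [hα] at key
    exact key
  -- assemble
  have hPF : M.pairing (fun s => w t - w' t - w s + w' s) 0 t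
      - M'.pairing (fun s => w t - w' t - w s + w' s) 0 t
      = ∑ i : Fin d, ((((∫ τ in Ioc 0 t, (w t - w' t - w τ + w' τ) i ∂(M.pos i))
          - ∫ τ in Ioc 0 t, (w t - w' t - w τ + w' τ) i ∂(M.neg i))
        - ((∫ τ in Ioc 0 t, (w t - w' t - w τ + w' τ) i ∂(M'.pos i))
          - ∫ τ in Ioc 0 t, (w t - w' t - w τ + w' τ) i ∂(M'.neg i)))) := by
    simp only [BVMeasureData.pairing]
    rw [← Finset.sum_sub_distrib]
  have hPG : M.pairing (fun τ => X τ - X' τ) 0 t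
      - M'.pairing (fun τ => X τ - X' τ) 0 t
      = ∑ i : Fin d, ((((∫ τ in Ioc 0 t, (X τ - X' τ) i ∂(M.pos i))
          - ∫ τ in Ioc 0 t, (X τ - X' τ) i ∂(M.neg i))
        - ((∫ τ in Ioc 0 t, (X τ - X' τ) i ∂(M'.pos i))
          - ∫ τ in Ioc 0 t, (X τ - X' τ) i ∂(M'.neg i)))) := by
    simp only [BVMeasureData.pairing]
    rw [← Finset.sum_sub_distrib]
  have hneg : M.pairing (fun τ => X τ - X' τ) 0 t
      - M'.pairing (fun τ => X τ - X' τ) 0 t ≤ 0 := by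
    have h1 := pairing_nonneg_of_rcll hconv hsol.assoc.normal hsol.rightCont hsol.leftLim
      hsol'.rightCont hsol'.leftLim hsol'.mem ht
    have h2 := pairing_nonneg_of_rcll hconv hsol'.assoc.normal hsol'.rightCont hsol'.leftLim
      hsol.rightCont hsol.leftLim hsol.mem ht
    have hflip : M.pairing (fun τ => X τ - X' τ) 0 t
        = - M.pairing (fun τ => X' τ - X τ) 0 t := by
      simp only [BVMeasureData.pairing, PiLp.sub_apply]
      rw [← Finset.sum_neg_distrib]
      apply Finset.sum_congr rfl
      intro i _
      have e : ∀ (μ : Measure ℝ), ∫ τ in Ioc 0 t, (X τ i - X' τ i) ∂μ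
          = - ∫ τ in Ioc 0 t, (X' τ i - X τ i) ∂μ := by
        intro μ
        rw [← integral_neg]
        exact integral_congr_ae (Eventually.of_forall fun τ => by ring)
      rw [e (M.pos i), e (M.neg i)]
      ring
    linarith
  calc ‖X t - X' t‖ ^ 2 = ∑ i : Fin d, (X t i - X' t i) ^ 2 := by
        rw [hnormsq]
        exact Finset.sum_congr rfl fun i _ => by simp [PiLp.sub_apply]
  _ ≤ ∑ i : Fin d, ((w t i - w' t i) ^ 2
        + 2 * (((((∫ τ in Ioc 0 t, (w t - w' t - w τ + w' τ) i ∂(M.pos i))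
                 - ∫ τ in Ioc 0 t, (w t - w' t - w τ + w' τ) i ∂(M.neg i))
               - ((∫ τ in Ioc 0 t, (w t - w' t - w τ + w' τ) i ∂(M'.pos i))
                 - ∫ τ in Ioc 0 t, (w t - w' t - w τ + w' τ) i ∂(M'.neg i))))
            + ((((∫ τ in Ioc 0 t, (X τ - X' τ) i ∂(M.pos i))
                 - ∫ τ in Ioc 0 t, (X τ - X' τ) i ∂(M.neg i))
               - ((∫ τ in Ioc 0 t, (X τ - X' τ) i ∂(M'.pos i))
                 - ∫ τ in Ioc 0 t, (X τ - X' τ) i ∂(M'.neg i)))))) :=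
      Finset.sum_le_sum fun i _ => hcomp i
  _ = ‖w t - w' t‖ ^ 2 + 2 * ((M.pairing (fun s => w t - w' t - w s + w' s) 0 t
        - M'.pairing (fun s => w t - w' t - w s + w' s) 0 t)
      + (M.pairing (fun τ => X τ - X' τ) 0 t - M'.pairing (fun τ => X τ - X' τ) 0 t)) := by
      rw [Finset.sum_add_distrib, ← Finset.mul_sum, Finset.sum_add_distrib, hPF, hPG]
      have : ∑ i : Fin d, (w t i - w' t i) ^ 2 = ‖w t - w' t‖ ^ 2 := by
        rw [hnormsq]
        exact Finset.sum_congr rfl fun i _ => by simp [PiLp.sub_apply]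
      rw [this]
  _ ≤ ‖w t - w' t‖ ^ 2 + 2 * (M.pairing (fun s => w t - w' t - w s + w' s) 0 t
        - M'.pairing (fun s => w t - w' t - w s + w' s) 0 t) := by linarith [hneg]

end
end

section
/- Let D be a nonempty convex open set in ℝ^d, let w : [0,∞) → ℝ^d be right-continuous with left limits with w(0) ∈ D̄, and let (X, φ) be a solution of the Skorohod equation X = w + φ. Then for all 0 ≤ s ≤ t: |X(t) − X(s)|² ≤ |w(t) − w(s)|² + 2 ∫_{(s,t]} ⟨w(t) − w(τ), dφ(τ)⟩. -/
open MeasureTheory Set Filter Topology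
open scoped RealInnerProductSpace

noncomputable section

namespace SkorohodAux

variable {d : ℕ}

lemma coord_abs_le_norm (x : Euc d) (i : Fin d) : |x i| ≤ ‖x‖ := by
  rw [EuclideanSpace.norm_eq, ← Real.sqrt_sq_eq_abs]
  apply Real.sqrt_le_sqrt
  simpa [Real.norm_eq_abs, sq_abs] using
    Finset.single_le_sum (f := fun j => ‖x j‖ ^ 2) (fun j _ => sq_nonneg _) (Finset.mem_univ i)

lemma bounded_of_rcll (f : ℝ → Euc d) (hrc : RightContinuousOnNonneg f)
    (hll : HasLeftLimitsOnPos f) {s t : ℝ} (hs : 0 ≤ s) :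
    ∃ C : ℝ, ∀ τ ∈ Icc s t, ‖f τ‖ ≤ C := by
  have claim : ∀ τ : ℝ, ∃ M : ℝ, τ ∈ Icc s t →
      ∀ᶠ u in 𝓝 τ, 0 ≤ u → ‖f u‖ ≤ M := by
    intro τ
    by_cases hτ : τ ∈ Icc s t
    swap
    · exact ⟨0, fun h => absurd h hτ⟩
    have hτ0 : (0:ℝ) ≤ τ := hs.trans hτ.1
    have hright : ∀ᶠ u in 𝓝[≥] τ, ‖f u‖ ≤ ‖f τ‖ + 1 :=
      ((hrc τ hτ0).norm).eventually (eventually_le_nhds (lt_add_one _))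
    rcases eq_or_lt_of_le hτ0 with h0 | h0
    · refine ⟨‖f τ‖ + 1, fun _ => ?_⟩
      have := eventually_nhdsWithin_iff.mp hright
      filter_upwards [this] with u hu hu0
      exact hu (h0 ▸ hu0)
    · obtain ⟨L, hL⟩ := hll τ h0
      have hleft : ∀ᶠ u in 𝓝[<] τ, ‖f u‖ ≤ ‖L‖ + 1 :=
        (hL.norm).eventually (eventually_le_nhds (lt_add_one _))
      refine ⟨max (‖f τ‖ + 1) (‖L‖ + 1), fun _ => ?_⟩
      have hsup : 𝓝 τ = 𝓝[<] τ ⊔ 𝓝[≥] τ := (nhdsLT_sup_nhdsGE τ).symm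
      rw [hsup, eventually_sup]
      constructor
      · filter_upwards [hleft] with u hu _; exact hu.trans (le_max_right _ _)
      · filter_upwards [hright] with u hu _; exact hu.trans (le_max_left _ _)
  choose M hM using claim
  obtain ⟨F, hFmem, hFcov⟩ := isCompact_Icc.elim_nhds_subcover
    (fun τ => {u : ℝ | 0 ≤ u → ‖f u‖ ≤ M τ}) (fun x hx => hM x hx)
  refine ⟨∑ τ ∈ F, |M τ|, fun u hu => ?_⟩
  obtain ⟨x, hxF, hxu⟩ := mem_iUnion₂.mp (hFcov hu)
  calc ‖f u‖ ≤ M x := hxu (hs.trans hu.1)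
    _ ≤ |M x| := le_abs_self _
    _ ≤ ∑ τ ∈ F, |M τ| :=
      Finset.single_le_sum (f := fun τ => |M τ|) (fun _ _ => abs_nonneg _) hxF


def grid (s t : ℝ) (n k : ℕ) : ℝ := s + (t - s) / (n + 1) * k

def step (f : ℝ → Euc d) (s t : ℝ) (n : ℕ) (τ : ℝ) : Euc d :=
  f (s + (t - s) / (n + 1) * ⌈(τ - s) / ((t - s) / (n + 1))⌉)

lemma grid_zero (s t : ℝ) (n : ℕ) : grid s t n 0 = s := by simp [grid]

lemma grid_last (s t : ℝ) (n : ℕ) : grid s t n (n + 1) = t := by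
  have : ((n:ℝ) + 1) ≠ 0 := by positivity
  simp only [grid]; push_cast; rw [div_mul_cancel₀ _ this]; ring

lemma grid_mono {s t : ℝ} (hst : s ≤ t) (n : ℕ) {k l : ℕ} (hkl : k ≤ l) :
    grid s t n k ≤ grid s t n l := by
  have hδ : 0 ≤ (t - s) / (n + 1) := by
    apply div_nonneg (by linarith) (by positivity)
  have : (k : ℝ) ≤ (l : ℝ) := by exact_mod_cast hkl
  unfold grid; nlinarith

lemma grid_ge_left {s t : ℝ} (hst : s ≤ t) (n k : ℕ) : s ≤ grid s t n k := by
  simpa [grid_zero] using grid_mono hst n (Nat.zero_le k)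

lemma grid_le_right {s t : ℝ} (hst : s ≤ t) (n : ℕ) {k : ℕ} (hk : k ≤ n + 1) :
    grid s t n k ≤ t := by
  simpa [grid_last] using grid_mono hst n hk

lemma step_measurable (f : ℝ → Euc d) (s t : ℝ) (n : ℕ) : Measurable (step f s t n) := by
  have h1 : Measurable fun τ : ℝ => (⌈(τ - s) / ((t - s) / (n + 1))⌉ : ℤ) :=
    Int.measurable_ceil.comp ((measurable_id.sub measurable_const).div_const _)
  exact (measurable_of_countable
    (fun z : ℤ => f (s + (t - s) / (n + 1) * z))).comp h1

lemma step_eq (f : ℝ → Euc d) {s t : ℝ} (hst : s < t) (n k : ℕ)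
    {τ : ℝ} (hτ : τ ∈ Ioc (grid s t n k) (grid s t n (k + 1))) :
    step f s t n τ = f (grid s t n (k + 1)) := by
  set δ := (t - s) / (n + 1) with hδdef
  have hδ : 0 < δ := div_pos (by linarith) (by positivity)
  have h1 : s + δ * k < τ := hτ.1
  have h2 : τ ≤ s + δ * (k + 1) := by
    have := hτ.2; simpa [grid, Nat.cast_add, Nat.cast_one] using this
  have hceil : ⌈(τ - s) / δ⌉ = (k : ℤ) + 1 := by
    rw [Int.ceil_eq_iff]
    constructor
    · push_cast
      rw [lt_div_iff₀ hδ]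
      ring_nf
      ring_nf at h1
      linarith
    · push_cast
      rw [div_le_iff₀ hδ]
      linarith
  have harg : s + δ * ((((k:ℤ) + 1 : ℤ)) : ℝ) = grid s t n (k + 1) := by
    unfold grid; push_cast; ring
  show f (s + δ * (⌈(τ - s) / δ⌉ : ℤ)) = f (grid s t n (k + 1))
  rw [hceil, harg]

lemma step_spec (f : ℝ → Euc d) {s t : ℝ} (hst : s < t) (n : ℕ) {τ : ℝ}
    (hτ : τ ∈ Ioc s t) :
    ∃ u, u ∈ Icc s t ∧ τ ≤ u ∧ u ≤ τ + (t - s) / (n + 1) ∧ step f s t n τ = f u := by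
  set δ := (t - s) / (n + 1) with hδdef
  have hδ : 0 < δ := div_pos (by linarith) (by positivity)
  set z := ⌈(τ - s) / δ⌉ with hz
  have hle : (τ - s) / δ ≤ z := Int.le_ceil _
  have hlt : (z : ℝ) < (τ - s) / δ + 1 := Int.ceil_lt_add_one _
  have hcan : (τ - s) / δ * δ = τ - s := div_mul_cancel₀ _ hδ.ne'
  have hτu : τ ≤ s + δ * z := by
    nlinarith [mul_le_mul_of_nonneg_left hle hδ.le]
  have huτ : s + δ * z ≤ τ + δ := by
    nlinarith [mul_lt_mul_of_pos_left hlt hδ]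
  have hzle : (z : ℝ) ≤ (n : ℝ) + 1 := by
    have hts : t - s ≠ 0 := sub_ne_zero.mpr hst.ne'
    have h2 : (t - s) / δ = (n : ℝ) + 1 := by
      rw [hδdef]; field_simp
    have h3 : (τ - s) / δ ≤ (n : ℝ) + 1 := by
      rw [← h2]
      gcongr
      · linarith [hτ.2]
    have h4 : z ≤ ⌈((n:ℝ) + 1)⌉ := Int.ceil_le_ceil h3
    have h5 : ⌈((n:ℝ) + 1)⌉ = (n : ℤ) + 1 := by
      rw [show ((n:ℝ) + 1) = (((n + 1 : ℕ)) : ℝ) by push_cast; ring, Int.ceil_natCast]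
      push_cast; ring
    rw [h5] at h4
    exact_mod_cast h4
  refine ⟨s + δ * z, ⟨?_, ?_⟩, hτu, by linarith, rfl⟩
  · linarith [hτ.1]
  · have : δ * z ≤ δ * ((n:ℝ) + 1) := by nlinarith
    have hδn : δ * ((n:ℝ) + 1) = t - s := by rw [hδdef]; field_simp
    linarith

lemma step_tendsto (f : ℝ → Euc d) (hrc : RightContinuousOnNonneg f) {s t : ℝ}
    (hs : 0 ≤ s) (hst : s < t) {τ : ℝ} (hτ : τ ∈ Ioc s t) :
    Tendsto (fun n => step f s t n τ) atTop (𝓝 (f τ)) := by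
  have hτ0 : (0:ℝ) ≤ τ := hs.trans hτ.1.le
  choose u hu1 hu2 hu3 hu4 using fun n => step_spec f hst n hτ
  have hub : Tendsto (fun n : ℕ => τ + (t - s) / (n + 1)) atTop (𝓝 τ) := by
    have h1 : Tendsto (fun n : ℕ => (t - s) * (1 / (n + 1))) atTop (𝓝 ((t - s) * 0)) :=
      tendsto_one_div_add_atTop_nhds_zero_nat.const_mul (t - s)
    have h2 : Tendsto (fun n : ℕ => (t - s) / (n + 1)) atTop (𝓝 0) := by
      simpa [div_eq_mul_inv] using h1
    simpa using tendsto_const_nhds.add h2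
  have humem : Tendsto u atTop (𝓝[≥] τ) := by
    apply tendsto_nhdsWithin_of_tendsto_nhds_of_eventually_within
    · exact tendsto_of_tendsto_of_tendsto_of_le_of_le tendsto_const_nhds hub hu2 hu3
    · exact Eventually.of_forall fun n => hu2 n
  have : Tendsto (fun n => f (u n)) atTop (𝓝 (f τ)) := (hrc τ hτ0).tendsto.comp humem
  exact this.congr fun n => (hu4 n).symm

lemma measurable_indicator_rc (f : ℝ → Euc d) (hrc : RightContinuousOnNonneg f)
    {s t : ℝ} (hs : 0 ≤ s) : Measurable ((Ioc s t).indicator f) := by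
  rcases le_or_gt t s with h | h
  · rw [Ioc_eq_empty (not_lt.mpr h)]
    simp only [indicator_empty]
    exact measurable_const
  · apply measurable_of_tendsto_metrizable
      (f := fun n => (Ioc s t).indicator (step f s t n))
      (fun n => (step_measurable f s t n).indicator measurableSet_Ioc)
    rw [tendsto_pi_nhds]
    intro τ
    by_cases hτ : τ ∈ Ioc s t
    · simp only [indicator_of_mem hτ]
      exact step_tendsto f hrc hs h hτ
    · refine Tendsto.congr (fun n => (indicator_of_notMem hτ _).symm) ?_
      rw [indicator_of_notMem hτ]
      exact tendsto_const_nhds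


lemma coord_measurable {g : ℝ → Euc d} (hg : Measurable g) (i : Fin d) :
    Measurable fun τ => g τ i := by
  have : Measurable fun x : Euc d => x i := (EuclideanSpace.proj (𝕜 := ℝ) i).continuous.measurable
  exact this.comp hg

lemma integrable_const_restrict {c : ℝ} {μ : Measure ℝ} {A : Set ℝ} (hμ : μ A < ⊤) :
    Integrable (fun _ : ℝ => c) (μ.restrict A) := by
  refine integrable_const_iff.mpr (Or.inr ?_)
  exact ⟨by rwa [Measure.restrict_apply_univ]⟩

lemma integrableOn_coord (f : ℝ → Euc d) (hrc : RightContinuousOnNonneg f)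
    {s t C : ℝ} (hs : 0 ≤ s) (hC : ∀ τ ∈ Icc s t, ‖f τ‖ ≤ C)
    (μ : Measure ℝ) (hμ : μ (Ioc s t) < ⊤) (i : Fin d) :
    IntegrableOn (fun τ => f τ i) (Ioc s t) μ := by
  have hmeas : Measurable fun τ => (Ioc s t).indicator f τ i :=
    coord_measurable (measurable_indicator_rc f hrc hs) i
  have haem : AEStronglyMeasurable (fun τ => f τ i) (μ.restrict (Ioc s t)) := by
    refine hmeas.aestronglyMeasurable.congr ?_
    filter_upwards [ae_restrict_mem measurableSet_Ioc] with τ hτ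
    rw [indicator_of_mem hτ]
  refine Integrable.mono' (integrable_const_restrict (c := C) hμ) haem ?_
  filter_upwards [ae_restrict_mem measurableSet_Ioc] with τ hτ
  rw [Real.norm_eq_abs]
  exact (coord_abs_le_norm _ i).trans (hC τ ⟨hτ.1.le, hτ.2⟩)

lemma integrableOn_step_coord (f : ℝ → Euc d) {s t C : ℝ} (hst : s < t)
    (hC : ∀ τ ∈ Icc s t, ‖f τ‖ ≤ C)
    (μ : Measure ℝ) (hμ : μ (Ioc s t) < ⊤) (i : Fin d) (n : ℕ)
    {a b : ℝ} (hab : Ioc a b ⊆ Ioc s t) :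
    IntegrableOn (fun τ => step f s t n τ i) (Ioc a b) μ := by
  have hμ' : μ (Ioc a b) < ⊤ := (measure_mono hab).trans_lt hμ
  refine Integrable.mono' (integrable_const_restrict (c := C) hμ')
    ((coord_measurable (step_measurable f s t n) i).aestronglyMeasurable) ?_
  filter_upwards [ae_restrict_mem measurableSet_Ioc] with τ hτ
  obtain ⟨u, hu1, -, -, hu4⟩ := step_spec f hst n (hab hτ)
  rw [Real.norm_eq_abs, hu4]
  exact (coord_abs_le_norm _ i).trans (hC u hu1)

lemma integral_step (f : ℝ → Euc d) {s t C : ℝ} (hs : 0 ≤ s) (hst : s < t)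
    (hC : ∀ τ ∈ Icc s t, ‖f τ‖ ≤ C)
    (μ : Measure ℝ) (hμ : μ (Ioc s t) < ⊤) (i : Fin d) (n : ℕ) :
    ∫ τ in Ioc s t, step f s t n τ i ∂μ =
      ∑ k ∈ Finset.range (n + 1),
        f (grid s t n (k + 1)) i * (μ (Ioc (grid s t n k) (grid s t n (k + 1)))).toReal := by
  have key : ∀ m : ℕ, m ≤ n + 1 →
      ∫ τ in Ioc s (grid s t n m), step f s t n τ i ∂μ =
      ∑ k ∈ Finset.range m,
        f (grid s t n (k + 1)) i * (μ (Ioc (grid s t n k) (grid s t n (k + 1)))).toReal := by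
    intro m
    induction m with
    | zero => intro _; simp [grid_zero]
    | succ m ih =>
      intro hm
      have hm' : m ≤ n + 1 := by omega
      have hsub1 : Ioc s (grid s t n m) ⊆ Ioc s t :=
        Ioc_subset_Ioc le_rfl (grid_le_right hst.le n hm')
      have hsub2 : Ioc (grid s t n m) (grid s t n (m + 1)) ⊆ Ioc s t :=
        Ioc_subset_Ioc (grid_ge_left hst.le n m) (grid_le_right hst.le n hm)
      have hunion : Ioc s (grid s t n m) ∪ Ioc (grid s t n m) (grid s t n (m + 1))
          = Ioc s (grid s t n (m + 1)) :=
        Ioc_union_Ioc_eq_Ioc (grid_ge_left hst.le n m) (grid_mono hst.le n (by omega))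
      rw [← hunion, setIntegral_union (Ioc_disjoint_Ioc_of_le le_rfl) measurableSet_Ioc
        (integrableOn_step_coord f hst hC μ hμ i n hsub1)
        (integrableOn_step_coord f hst hC μ hμ i n hsub2),
        ih hm', Finset.sum_range_succ]
      congr 1
      rw [setIntegral_congr_fun measurableSet_Ioc
        (g := fun _ => f (grid s t n (m + 1)) i)
        (fun τ hτ => by rw [step_eq f hst n m hτ]),
        setIntegral_const, smul_eq_mul, mul_comm, measureReal_def]
  have := key (n + 1) le_rfl
  rwa [grid_last] at this

lemma tendsto_integral_step (f : ℝ → Euc d) (hrc : RightContinuousOnNonneg f)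
    {s t C : ℝ} (hs : 0 ≤ s) (hst : s < t) (hC : ∀ τ ∈ Icc s t, ‖f τ‖ ≤ C)
    (μ : Measure ℝ) (hμ : μ (Ioc s t) < ⊤) (i : Fin d) :
    Tendsto (fun n => ∫ τ in Ioc s t, step f s t n τ i ∂μ) atTop
      (𝓝 (∫ τ in Ioc s t, f τ i ∂μ)) := by
  apply tendsto_integral_of_dominated_convergence (fun _ => C)
  · exact fun n => ((coord_measurable (step_measurable f s t n) i).aestronglyMeasurable)
  · exact integrable_const_restrict hμ
  · intro n
    filter_upwards [ae_restrict_mem measurableSet_Ioc] with τ hτ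
    obtain ⟨u, hu1, -, -, hu4⟩ := step_spec f hst n hτ
    rw [Real.norm_eq_abs, hu4]
    exact (coord_abs_le_norm _ i).trans (hC u hu1)
  · filter_upwards [ae_restrict_mem measurableSet_Ioc] with τ hτ
    exact ((EuclideanSpace.proj (𝕜 := ℝ) i).continuous.tendsto _).comp
      (step_tendsto f hrc hs hst hτ)

end SkorohodAux

namespace SkorohodAux2
open SkorohodAux

variable {d : ℕ}

lemma phi_bound {φ : ℝ → Euc d} {s t : ℝ} (hs : 0 ≤ s) (hst : s ≤ t)
    (hbv : ∀ u : ℝ, 0 ≤ u → eVariationOn φ (Icc 0 u) < ⊤) :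
    ∀ τ ∈ Icc s t, ‖φ τ‖ ≤ ‖φ s‖ + (eVariationOn φ (Icc s t)).toReal := by
  have ht0 : (0:ℝ) ≤ t := hs.trans hst
  have hvar : eVariationOn φ (Icc s t) < ⊤ :=
    lt_of_le_of_lt (eVariationOn.mono φ (Icc_subset_Icc hs le_rfl)) (hbv t ht0)
  intro τ hτ
  have h1 : edist (φ τ) (φ s) ≤ eVariationOn φ (Icc s t) :=
    eVariationOn.edist_le φ hτ ⟨le_rfl, hst⟩
  have h2 : dist (φ τ) (φ s) ≤ (eVariationOn φ (Icc s t)).toReal := by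
    rw [dist_edist]
    exact ENNReal.toReal_mono hvar.ne h1
  have h3 : ‖φ τ - φ s‖ = dist (φ τ) (φ s) := (dist_eq_norm _ _).symm
  calc ‖φ τ‖ = ‖φ s + (φ τ - φ s)‖ := by congr 1; abel
    _ ≤ ‖φ s‖ + ‖φ τ - φ s‖ := norm_add_le _ _
    _ ≤ ‖φ s‖ + (eVariationOn φ (Icc s t)).toReal := by rw [h3]; linarith

lemma measure_Ioc_lt_top {φ : ℝ → Euc d} (M : BVMeasureData d φ) {s t : ℝ}
    (hs : 0 ≤ s) (i : Fin d) :
    M.pos i (Ioc s t) < ⊤ ∧ M.neg i (Ioc s t) < ⊤ := by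
  have hsub : Ioc s t ⊆ Icc 0 t := fun τ hτ => ⟨hs.trans hτ.1.le, hτ.2⟩
  exact ⟨(measure_mono hsub).trans_lt (M.pos_fin i t),
    (measure_mono hsub).trans_lt (M.neg_fin i t)⟩

lemma key_ineq (φ : ℝ → Euc d) (M : BVMeasureData d φ) (hrc : RightContinuousOnNonneg φ)
    (hbv : ∀ u : ℝ, 0 ≤ u → eVariationOn φ (Icc 0 u) < ⊤)
    {s t : ℝ} (hs : 0 ≤ s) (hst : s ≤ t) :
    ‖φ t‖ ^ 2 - ‖φ s‖ ^ 2 ≤ 2 * M.pairing (fun τ => φ τ) s t := by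
  rcases eq_or_lt_of_le hst with rfl | hlt
  · simp [BVMeasureData.pairing]
  set C := ‖φ s‖ + (eVariationOn φ (Icc s t)).toReal with hCdef
  have hC : ∀ τ ∈ Icc s t, ‖φ τ‖ ≤ C := phi_bound hs hst hbv
  -- value of pairing of step functions
  have hval : ∀ n : ℕ, M.pairing (step φ s t n) s t =
      ∑ k ∈ Finset.range (n + 1),
        ⟪φ (grid s t n (k + 1)), φ (grid s t n (k + 1)) - φ (grid s t n k)⟫ := by
    intro n
    unfold BVMeasureData.pairing
    have : ∀ i : Fin d,
        (∫ τ in Ioc s t, step φ s t n τ i ∂(M.pos i)) -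
          ∫ τ in Ioc s t, step φ s t n τ i ∂(M.neg i) =
        ∑ k ∈ Finset.range (n + 1),
          φ (grid s t n (k + 1)) i * (φ (grid s t n (k + 1)) i - φ (grid s t n k) i) := by
      intro i
      rw [integral_step φ hs hlt hC _ (measure_Ioc_lt_top M hs i).1 i n,
        integral_step φ hs hlt hC _ (measure_Ioc_lt_top M hs i).2 i n,
        ← Finset.sum_sub_distrib]
      refine Finset.sum_congr rfl fun k _ => ?_
      rw [← mul_sub,
        M.increments i (grid s t n k) (grid s t n (k + 1))
          (hs.trans (grid_ge_left hst n k)) (grid_mono hst n (by omega))]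
    rw [Finset.sum_congr rfl fun i _ => this i, Finset.sum_comm]
    refine Finset.sum_congr rfl fun k _ => ?_
    rw [PiLp.inner_apply]
    refine Finset.sum_congr rfl fun i _ => ?_
    simp [RCLike.inner_apply, PiLp.sub_apply, mul_comm]
  have hlow : ∀ n : ℕ, ‖φ t‖ ^ 2 - ‖φ s‖ ^ 2 ≤ 2 * M.pairing (step φ s t n) s t := by
    intro n
    rw [hval n]
    have hterm : ∀ k ∈ Finset.range (n + 1),
        ‖φ (grid s t n (k + 1))‖ ^ 2 - ‖φ (grid s t n k)‖ ^ 2 ≤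
          2 * ⟪φ (grid s t n (k + 1)), φ (grid s t n (k + 1)) - φ (grid s t n k)⟫ := by
      intro k _
      set b := φ (grid s t n (k + 1)); set a := φ (grid s t n k)
      have h1 : ‖b - a‖ ^ 2 = ‖b‖ ^ 2 - 2 * ⟪b, a⟫ + ‖a‖ ^ 2 := norm_sub_sq_real b a
      have h2 : ⟪b, b - a⟫ = ⟪b, b⟫ - ⟪b, a⟫ := inner_sub_right _ _ _
      have h3 : ⟪b, b⟫ = ‖b‖ ^ 2 := real_inner_self_eq_norm_sq b
      nlinarith [sq_nonneg ‖b - a‖]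
    have htel : ∑ k ∈ Finset.range (n + 1),
        (‖φ (grid s t n (k + 1))‖ ^ 2 - ‖φ (grid s t n k)‖ ^ 2) =
        ‖φ t‖ ^ 2 - ‖φ s‖ ^ 2 := by
      rw [Finset.sum_range_sub (fun k => ‖φ (grid s t n k)‖ ^ 2), grid_zero, grid_last]
    calc ‖φ t‖ ^ 2 - ‖φ s‖ ^ 2
        = ∑ k ∈ Finset.range (n + 1),
            (‖φ (grid s t n (k + 1))‖ ^ 2 - ‖φ (grid s t n k)‖ ^ 2) := htel.symm
      _ ≤ ∑ k ∈ Finset.range (n + 1),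
            2 * ⟪φ (grid s t n (k + 1)), φ (grid s t n (k + 1)) - φ (grid s t n k)⟫ :=
          Finset.sum_le_sum hterm
      _ = 2 * ∑ k ∈ Finset.range (n + 1),
            ⟪φ (grid s t n (k + 1)), φ (grid s t n (k + 1)) - φ (grid s t n k)⟫ := by
          rw [Finset.mul_sum]
  have hconv : Tendsto (fun n => M.pairing (step φ s t n) s t) atTop
      (𝓝 (M.pairing (fun τ => φ τ) s t)) := by
    unfold BVMeasureData.pairing
    apply tendsto_finset_sum
    intro i _
    exact (tendsto_integral_step φ hrc hs hlt hC _ (measure_Ioc_lt_top M hs i).1 i).sub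
      (tendsto_integral_step φ hrc hs hlt hC _ (measure_Ioc_lt_top M hs i).2 i)
  exact ge_of_tendsto' (hconv.const_mul 2) hlow

end SkorohodAux2



lemma pairing_split {d : ℕ} (D : Set (Euc d)) (w X φ : ℝ → Euc d) (M : BVMeasureData d φ)
    (hsol : IsSkorohodSolution D w X φ M) {s t : ℝ} (hs : 0 ≤ s) (hst : s ≤ t) :
    M.pairing (fun τ => w t - w τ) s t =
      M.pairing (fun τ => X s - X τ) s t + ⟪w t - X s, φ t - φ s⟫ +
        M.pairing (fun τ => φ τ) s t := by
  classical
  obtain ⟨CX, hCX⟩ := SkorohodAux.bounded_of_rcll X hsol.rightCont hsol.leftLim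
    (s := s) (t := t) hs
  have hCφ := SkorohodAux2.phi_bound (φ := φ) hs hst hsol.assoc.bv
  have hgen : ∀ μ : Measure ℝ, μ (Ioc s t) < ⊤ → ∀ i : Fin d,
      ∫ τ in Ioc s t, (w t - w τ) i ∂μ =
        (∫ τ in Ioc s t, (X s - X τ) i ∂μ) +
          ((w t - X s) i * (μ (Ioc s t)).toReal + ∫ τ in Ioc s t, φ τ i ∂μ) := by
    intro μ hμ i
    have hXint : IntegrableOn (fun τ => X τ i) (Ioc s t) μ :=
      SkorohodAux.integrableOn_coord X hsol.rightCont hs hCX μ hμ i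
    have hφint : IntegrableOn (fun τ => φ τ i) (Ioc s t) μ :=
      SkorohodAux.integrableOn_coord φ hsol.assoc.rightCont hs hCφ μ hμ i
    have h1 : Integrable (fun τ => (X s - X τ) i) (μ.restrict (Ioc s t)) := by
      have e : (fun τ : ℝ => (X s - X τ) i) = fun τ => X s i - X τ i := by
        funext τ; simp [PiLp.sub_apply]
      rw [e]
      exact (SkorohodAux.integrable_const_restrict hμ).sub hXint
    have hrest : Integrable (fun τ => (w t - X s) i + φ τ i) (μ.restrict (Ioc s t)) :=
      (SkorohodAux.integrable_const_restrict hμ).add hφint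
    have heq : EqOn (fun τ => (w t - w τ) i)
        (fun τ => (X s - X τ) i + ((w t - X s) i + φ τ i)) (Ioc s t) := by
      intro τ hτ
      have hτ0 : (0:ℝ) ≤ τ := hs.trans hτ.1.le
      have hw : w τ = X τ - φ τ := by rw [hsol.eqn τ hτ0]; abel
      simp only [hw, PiLp.sub_apply]
      ring
    rw [setIntegral_congr_fun measurableSet_Ioc heq,
      MeasureTheory.integral_add h1 hrest,
      MeasureTheory.integral_add (SkorohodAux.integrable_const_restrict hμ) hφint,
      setIntegral_const, smul_eq_mul, mul_comm, measureReal_def]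
  have hinner : ⟪w t - X s, φ t - φ s⟫ = ∑ i : Fin d, (w t - X s) i * (φ t i - φ s i) := by
    rw [PiLp.inner_apply]
    refine Finset.sum_congr rfl fun i _ => ?_
    simp [RCLike.inner_apply, PiLp.sub_apply]; ring
  unfold BVMeasureData.pairing
  rw [hinner, ← Finset.sum_add_distrib, ← Finset.sum_add_distrib]
  refine Finset.sum_congr rfl fun i _ => ?_
  rw [hgen (M.pos i) (SkorohodAux2.measure_Ioc_lt_top M hs i).1 i,
    hgen (M.neg i) (SkorohodAux2.measure_Ioc_lt_top M hs i).2 i]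
  have hinc := M.increments i s t hs hst
  rw [← hinc]
  ring

/-- **Lemma 4.1.2(ii).** If `(X, φ)` solves the Skorohod equation `X = w + φ` for a nonempty
convex open `D ⊆ ℝ^d`, then for all `0 ≤ s ≤ t`,
`|X(t) − X(s)|² ≤ |w(t) − w(s)|² + 2∫_{(s,t]} ⟨w(t) − w(τ), dφ(τ)⟩`. -/
theorem skorohod_increment_estimate {d : ℕ} (D : Set (Euc d)) (hne : D.Nonempty)
    (hconv : Convex ℝ D) (hopen : IsOpen D)
    (w X φ : ℝ → Euc d)
    (hw_rc : RightContinuousOnNonneg w) (hw_ll : HasLeftLimitsOnPos w)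
    (hw0 : w 0 ∈ closure D)
    (M : BVMeasureData d φ)
    (hsol : IsSkorohodSolution D w X φ M) :
    ∀ s t : ℝ, 0 ≤ s → s ≤ t →
      ‖X t - X s‖ ^ 2 ≤ ‖w t - w s‖ ^ 2 +
        2 * M.pairing (fun τ => w t - w τ) s t := by
  intro s t hs hst
  have ht0 : (0:ℝ) ≤ t := hs.trans hst
  have hA : 0 ≤ M.pairing (fun τ => X s - X τ) s t :=
    hsol.assoc.normal (fun _ => X s) continuous_const (fun u _ => hsol.mem s hs) s t hs hst
  have hKey := SkorohodAux2.key_ineq φ M hsol.assoc.rightCont hsol.assoc.bv hs hst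
  have hSplit := pairing_split D w X φ M hsol hs hst
  have hXt := hsol.eqn t ht0
  have hXs := hsol.eqn s hs
  have h1 : X t - X s = (w t - w s) + (φ t - φ s) := by rw [hXt, hXs]; abel
  rw [h1, norm_add_sq_real, hSplit]
  have h2 : ⟪w t - X s, φ t - φ s⟫ = ⟪w t - w s, φ t - φ s⟫ - ⟪φ s, φ t - φ s⟫ := by
    have e : w t - X s = (w t - w s) - φ s := by rw [hXs]; abel
    rw [e, inner_sub_left]
  have h3 : ‖φ t‖ ^ 2 - ‖φ s‖ ^ 2 = 2 * ⟪φ s, φ t - φ s⟫ + ‖φ t - φ s‖ ^ 2 := by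
    have hn : ‖φ t - φ s‖ ^ 2 = ‖φ t‖ ^ 2 - 2 * ⟪φ t, φ s⟫ + ‖φ s‖ ^ 2 :=
      norm_sub_sq_real _ _
    have hi : ⟪φ s, φ t - φ s⟫ = ⟪φ s, φ t⟫ - ‖φ s‖ ^ 2 := by
      rw [inner_sub_right, real_inner_self_eq_norm_sq]
    have hc : ⟪φ s, φ t⟫ = ⟪φ t, φ s⟫ := real_inner_comm _ _
    linarith
  rw [h2]
  linarith [hA, hKey, h3]


end
end
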